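/- arXiv:2106.04962 — 8 statements merged into one kernel-verified Lean document; each statement's English description precedes it below -/
import Mathlib

section
/- Let 0 ≤ α < 1. If f ∈ 𝒜 satisfies f(z) ≠ 0 for z ∈ 𝔻\{0}, f'(z) ≠ 0 for z ∈ 𝔻, and f(z)f''(z)/f'(z)² ≺ 2(1−α)((1−2α)z² + 2z)/(1 + (1−2α)z)², then f is starlike of order α, i.e. Re(zf'(z)/f(z)) > α for all z ∈ 𝔻 (interpreting the quotient as 1 at z = 0). -/
open Complex Metric Set

noncomputable section

/-- The open unit disk in `ℂ`. -/
def 𝔻 : Set ℂ := Metric.ball 0 1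

/-- The class `𝒜` of analytic functions on `𝔻` normalized by `f 0 = 0`, `f' 0 = 1`. -/
def IsClassA (f : ℂ → ℂ) : Prop :=
  DifferentiableOn ℂ f 𝔻 ∧ f 0 = 0 ∧ deriv f 0 = 1

/-- `g` is subordinate to `F` on the unit disk. -/
def Subordinate (g F : ℂ → ℂ) : Prop :=
  ∃ ω : ℂ → ℂ, DifferentiableOn ℂ ω 𝔻 ∧ ω 0 = 0 ∧ (∀ z ∈ 𝔻, ω z ∈ 𝔻) ∧
    ∀ z ∈ 𝔻, g z = F (ω z)

/-- `ψ` is a Ma-Minda function: analytic and univalent on `𝔻`, `Re ψ > 0`, `ψ 0 = 1`,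
`ψ' 0 > 0`, with real Taylor coefficients (expressed via `ψ (conj z) = conj (ψ z)`). -/
def MaMinda (ψ : ℂ → ℂ) : Prop :=
  DifferentiableOn ℂ ψ 𝔻 ∧ Set.InjOn ψ 𝔻 ∧ (∀ z ∈ 𝔻, 0 < (ψ z).re) ∧
    ψ 0 = 1 ∧ 0 < (deriv ψ 0).re ∧ (deriv ψ 0).im = 0 ∧
    (∀ z ∈ 𝔻, ψ (starRingEnd ℂ z) = starRingEnd ℂ (ψ z))

/-- The Ma-Minda starlike class `S*(ψ)`. -/
def StarlikeMM (ψ f : ℂ → ℂ) : Prop :=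
  IsClassA f ∧ (∀ z ∈ 𝔻, z ≠ 0 → f z ≠ 0) ∧
    Subordinate (fun z => if z = 0 then 1 else z * deriv f z / f z) ψ

/-- The Ma-Minda convex class `C(ψ)`. -/
def ConvexMM (ψ f : ℂ → ℂ) : Prop :=
  IsClassA f ∧ (∀ z ∈ 𝔻, deriv f z ≠ 0) ∧
    Subordinate (fun z => 1 + z * deriv (deriv f) z / deriv f z) ψ

/-- `f` is starlike of order `α`. -/
def StarlikeOrder (α : ℝ) (f : ℂ → ℂ) : Prop :=
  IsClassA f ∧ (∀ z ∈ 𝔻, z ≠ 0 → f z ≠ 0) ∧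
    ∀ z ∈ 𝔻, z ≠ 0 → α < (z * deriv f z / f z).re

/-- `f` is a (normalized) convex function on `𝔻`. -/
def IsConvexFn (f : ℂ → ℂ) : Prop :=
  IsClassA f ∧ (∀ z ∈ 𝔻, deriv f z ≠ 0) ∧
    ∀ z ∈ 𝔻, 0 < (1 + z * deriv (deriv f) z / deriv f z).re


section AuxLemmasForStmt1

open Complex Metric Set Topology

/-- Compatibility: the complex absolute value as an `AbsoluteValue` (equal to the norm). -/
def Complex.abs : AbsoluteValue ℂ ℝ := IsAbsoluteValue.toAbsoluteValue (norm : ℂ → ℝ)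

@[simp] lemma Complex.norm_eq_abs (z : ℂ) : ‖z‖ = Complex.abs z := rfl

lemma Complex.abs_apply (z : ℂ) : Complex.abs z = Real.sqrt (Complex.normSq z) :=
  (Complex.norm_def z)

@[simp] lemma Complex.abs_ofReal (r : ℝ) : Complex.abs (r : ℂ) = |r| := Complex.norm_real r

@[simp] lemma Complex.abs_two : Complex.abs 2 = 2 := by
  rw [← Complex.norm_eq_abs]; norm_num

@[simp] lemma Complex.abs_conj (z : ℂ) : Complex.abs (starRingEnd ℂ z) = Complex.abs z :=
  Complex.norm_conj z

@[simp] lemma Complex.abs_exp_ofReal_mul_I (x : ℝ) : Complex.abs (Complex.exp (x * Complex.I)) = 1 :=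
  Complex.norm_exp_ofReal_mul_I x

lemma Complex.sq_abs (z : ℂ) : Complex.abs z ^ 2 = Complex.normSq z := Complex.sq_norm z

lemma Complex.normSq_eq_abs (z : ℂ) : Complex.normSq z = Complex.abs z ^ 2 :=
  Complex.normSq_eq_norm_sq z

lemma Complex.re_le_abs (z : ℂ) : z.re ≤ Complex.abs z := Complex.re_le_norm z

lemma Complex.abs_le_abs_of_mapsTo_ball_self {f : ℂ → ℂ} {R : ℝ} {z : ℂ}
    (hd : DifferentiableOn ℂ f (ball 0 R)) (h_maps : MapsTo f (ball 0 R) (ball 0 R))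
    (h₀ : f 0 = 0) (hz : Complex.abs z < R) : Complex.abs (f z) ≤ Complex.abs z :=
  Complex.norm_le_norm_of_mapsTo_ball hd (h_maps.mono_right ball_subset_closedBall) h₀ hz

lemma coefNonneg {a b : ℝ} (ha : 0 ≤ a) (hb : 0 ≤ b) (h1 : a - b ≤ 2) (h2 : b - a ≤ 2) :
    0 ≤ 4 + 4*a*b + a^2 - b^2 := by
  nlinarith [mul_nonneg (by linarith : (0:ℝ) ≤ 2 - (a-b)) (by linarith : (0:ℝ) ≤ 2 + (a-b)),
    mul_nonneg (add_nonneg ha hb) ha]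

lemma claimB (κ : ℝ) (s : ℂ) (hκ : 0 < κ) (h : Complex.abs (s^2 - 1) ≤ κ) :
    Complex.abs s * Complex.abs (s+1) ≤ Complex.abs (s+1+κ) := by
  set a := Complex.abs (s+1) with hadef
  set b := Complex.abs (s-1) with hbdef
  have ha : 0 ≤ a := Complex.abs.nonneg _
  have hb : 0 ≤ b := Complex.abs.nonneg _
  have hab : a * b ≤ κ := by
    have : a * b = Complex.abs (s^2 - 1) := by
      rw [hadef, hbdef, ← map_mul]; ring_nf
    linarith [this ▸ h]
  have habd : |a - b| ≤ 2 := by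
    have := Complex.abs.abs_abv_sub_le_abv_sub (s+1) (s-1)
    have e : (s+1) - (s-1) = 2 := by ring
    rw [e, Complex.abs_two] at this
    exact this
  have h1 : a - b ≤ 2 := (abs_le.mp habd).2
  have h2 : b - a ≤ 2 := by linarith [(abs_le.mp habd).1]
  have ha2 : a^2 = (s.re+1)^2 + s.im^2 := by
    rw [hadef, Complex.sq_abs, Complex.normSq_apply]; simp; ring
  have hb2 : b^2 = (s.re-1)^2 + s.im^2 := by
    rw [hbdef, Complex.sq_abs, Complex.normSq_apply]; simp; ring
  have hcoef := coefNonneg ha hb h1 h2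
  have hδ : 0 ≤ κ - a*b := by linarith
  have h4 : 0 ≤ 4 - (a-b)^2 := by nlinarith
  -- reduce to squares
  have key : (Complex.abs s * Complex.abs (s+1))^2 ≤ (Complex.abs (s+1+κ))^2 := by
    rw [mul_pow, Complex.sq_abs, Complex.sq_abs, Complex.sq_abs, Complex.normSq_apply,
      Complex.normSq_apply, Complex.normSq_apply]
    simp only [Complex.add_re, Complex.add_im, Complex.one_re, Complex.one_im,
      Complex.ofReal_re, Complex.ofReal_im]
    nlinarith [mul_nonneg (mul_nonneg ha (add_nonneg ha hb)) h4,
      mul_nonneg hδ hcoef, sq_nonneg (κ - a*b), ha2, hb2]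
  calc Complex.abs s * Complex.abs (s+1) 
      = √((Complex.abs s * Complex.abs (s+1))^2) := by
        rw [Real.sqrt_sq (mul_nonneg (Complex.abs.nonneg _) ha)]
    _ ≤ √((Complex.abs (s+1+κ))^2) := Real.sqrt_le_sqrt key
    _ = _ := Real.sqrt_sq (Complex.abs.nonneg _)


lemma noSolution (β k : ℝ) (u w : ℂ) (hβ1 : -1 < β) (hβ2 : β ≤ 1)
    (hu : Complex.abs u = 1) (hbu : 1 + (β:ℂ)*u ≠ 0) (hw : Complex.abs w < 1) (hk : 1 ≤ k) :
    u*(1 + (β:ℂ)*u + (k:ℂ))*(1 + (β:ℂ)*w)^2 ≠ w*((β:ℂ)*w + 2)*(1 + (β:ℂ)*u)^2 := by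
  intro heq
  have habsB : Complex.abs ((β:ℂ)) = |β| := Complex.abs_ofReal β
  by_cases hβ0 : β = 0
  · rw [hβ0] at heq
    push_cast at heq
    simp only [zero_mul, add_zero, zero_add, one_pow, mul_one] at heq
    have h1 : Complex.abs (u * (1 + (k:ℂ))) = 1 + k := by
      rw [map_mul, hu, one_mul]
      have e : ((1:ℂ) + (k:ℂ)) = ((1+k:ℝ):ℂ) := by push_cast; ring
      rw [e, Complex.abs_ofReal, abs_of_pos (by linarith)]
    have h2 : Complex.abs (w * 2) < 2 := by
      rw [map_mul, Complex.abs_two]; nlinarith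
    rw [← heq, h1] at h2
    linarith
  · have habsB' : 0 < |β| := abs_pos.mpr hβ0
    have hβle : |β| ≤ 1 := abs_le.mpr ⟨by linarith, hβ2⟩
    set x : ℂ := (β:ℂ) * u with hxdef
    have habsx : Complex.abs x = |β| := by rw [hxdef, map_mul, habsB, hu, mul_one]
    have hx0 : x ≠ 0 := by
      intro h; rw [h] at habsx; simp at habsx; exact hβ0 (abs_eq_zero.mp habsx.symm)
    have h1x : 1 + x ≠ 0 := hbu
    have hkey : (1 - ((k:ℂ) - 1)*x)*(1 + (β:ℂ)*w)^2 = (1 + x)^2 := by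
      linear_combination (-(β:ℂ))*heq
    have habsBw : Complex.abs ((β:ℂ)*w) < |β| := by
      rw [map_mul, habsB]; nlinarith [Complex.abs.nonneg w]
    have hBw : 1 + (β:ℂ)*w ≠ 0 := by
      intro h
      have h2 : (β:ℂ)*w = -1 := by linear_combination h
      rw [h2] at habsBw; simp at habsBw; linarith
    by_cases hk1 : k = 1
    · have hkey1 : (1 + (β:ℂ)*w)^2 = (1 + x)^2 := by
        rw [hk1] at hkey; push_cast at hkey; linear_combination hkey
      have hfac : ((β:ℂ)*w - x)*(2 + (β:ℂ)*w + x) = 0 := by linear_combination hkey1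
      rcases mul_eq_zero.mp hfac with h | h
      · have hBwx : (β:ℂ)*w = x := by linear_combination h
        rw [hBwx, habsx] at habsBw; linarith
      · have hBwx : (β:ℂ)*w = -2 - x := by linear_combination h
        have h3 : Complex.abs ((β:ℂ)*w) = Complex.abs (2 + x) := by
          rw [hBwx, show (-2 - x : ℂ) = -(2+x) by ring, map_neg_eq_map]
        have h4 : 2 - |β| ≤ Complex.abs (2 + x) := by
          have h5 := Complex.abs.add_le (2+x) (-x)
          simp only [add_neg_cancel_right] at h5
          rw [map_neg_eq_map, habsx] at h5
          have h2' : Complex.abs (2:ℂ) = 2 := Complex.abs_two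
          linarith
        rw [h3] at habsBw
        linarith
    · have hκpos : 0 < k - 1 := lt_of_le_of_ne (by linarith) (fun h => hk1 (by linarith))
      have hKcast : (k:ℂ) - 1 = ((k-1:ℝ):ℂ) := by push_cast; ring
      rw [hKcast] at hkey
      obtain ⟨s, hsdef⟩ : ∃ s : ℂ, s = (1 + x)/(1 + (β:ℂ)*w) := ⟨_, rfl⟩
      have hs2 : s^2 = 1 - ((k-1:ℝ):ℂ)*x := by
        rw [hsdef, div_pow, eq_comm, eq_div_iff (pow_ne_zero 2 hBw)]
        linear_combination hkey
      have hs0 : s ≠ 0 := by rw [hsdef]; exact div_ne_zero h1x hBw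
      have hs1 : s ≠ 1 := by
        intro h
        rw [h, one_pow] at hs2
        have h2 : ((k-1:ℝ):ℂ)*x = 0 := by linear_combination hs2
        rcases mul_eq_zero.mp h2 with h' | h'
        · exact hκpos.ne' (by exact_mod_cast h')
        · exact hx0 h'
      have habss : Complex.abs (s^2 - 1) ≤ k-1 := by
        rw [hs2, show (1:ℂ) - ((k-1:ℝ):ℂ)*x - 1 = -(((k-1:ℝ):ℂ)*x) by ring, map_neg_eq_map,
          map_mul, Complex.abs_ofReal, habsx, abs_of_pos hκpos]
        nlinarith
      have hCB := claimB (k-1) s hκpos habss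
      have hsb : s * (1 + (β:ℂ)*w) = 1 + x := by
        rw [hsdef, div_mul_cancel₀ _ hBw]
      have hlt : Complex.abs (1 + x - s) < Complex.abs x * Complex.abs s := by
        have e : 1 + x - s = ((β:ℂ)*w)*s := by linear_combination -hsb
        rw [e, map_mul]
        have h6 : Complex.abs ((β:ℂ)*w) < Complex.abs x := by rw [habsx]; exact habsBw
        exact mul_lt_mul_of_pos_right h6 (Complex.abs.pos hs0)
      have e1 : ((k-1:ℝ):ℂ)*(1 + x - s) = (1-s)*(s+1+((k-1:ℝ):ℂ)) := by
        linear_combination hs2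
      have e2 : ((k-1:ℝ):ℂ)*(x*s) = s*(1-s)*(s+1) := by linear_combination s*hs2
      have habs1 : (k-1) * Complex.abs (1+x-s)
          = Complex.abs (1-s) * Complex.abs (s+1+((k-1:ℝ):ℂ)) := by
        have h5 := congrArg Complex.abs e1
        simp only [map_mul, Complex.abs_ofReal] at h5
        rw [abs_of_pos hκpos] at h5
        linear_combination h5
      have habs2 : (k-1) * (Complex.abs x * Complex.abs s)
          = Complex.abs s * (Complex.abs (1-s) * Complex.abs (s+1)) := by
        have h5 := congrArg Complex.abs e2
        simp only [map_mul, Complex.abs_ofReal] at h5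
        rw [abs_of_pos hκpos] at h5
        linear_combination h5
      have hmul : (k-1) * Complex.abs (1+x-s) < (k-1) * (Complex.abs x * Complex.abs s) :=
        mul_lt_mul_of_pos_left hlt hκpos
      rw [habs1, habs2] at hmul
      have hpos1 : 0 < Complex.abs (1-s) := by
        apply Complex.abs.pos
        intro h; apply hs1; linear_combination -h
      nlinarith [hmul, hCB, hpos1, Complex.abs.nonneg s, Complex.abs.nonneg (s+1)]


lemma jack {φ : ℂ → ℂ} {Dφ : ℂ}
    (hdOn : DifferentiableOn ℂ φ (Metric.ball 0 1))
    (hd1 : HasDerivAt φ Dφ 1)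
    (hmaps : ∀ ζ : ℂ, Complex.abs ζ < 1 → Complex.abs (φ ζ) < 1)
    (hb : ∀ θ : ℝ, Complex.abs (φ (Complex.exp (θ*Complex.I))) ≤ 1)
    (h0 : φ 0 = 0) (h1 : Complex.abs (φ 1) = 1) :
    ∃ k : ℝ, 1 ≤ k ∧ Dφ = (k:ℂ) * φ 1 := by
  -- Schwarz
  have hschwarz : ∀ ζ : ℂ, Complex.abs ζ < 1 → Complex.abs (φ ζ) ≤ Complex.abs ζ := by
    intro ζ hζ
    exact Complex.abs_le_abs_of_mapsTo_ball_self hdOn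
      (fun y hy => by
        rw [mem_ball_zero_iff] at hy ⊢
        exact hmaps y (by simpa using hy)) h0 hζ
  set C : ℂ := (starRingEnd ℂ) (φ 1) with hCdef
  set c : ℂ := C * Dφ with hcdef
  have habsC : Complex.abs C = 1 := by rw [hCdef, Complex.abs_conj, h1]
  have hCφ1 : φ 1 * C = 1 := by
    rw [hCdef, Complex.mul_conj]
    norm_cast
    rw [Complex.normSq_eq_abs, h1]; norm_num
  -- tangential derivative: c.im = 0
  have hinner : HasDerivAt (fun z : ℂ => C * φ (Complex.exp (z * Complex.I))) (c * Complex.I) 0 := by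
    have h2 : HasDerivAt (fun z : ℂ => z * Complex.I) Complex.I 0 := by
      simpa using (hasDerivAt_id (0:ℂ)).mul_const Complex.I
    have h3 : HasDerivAt Complex.exp (Complex.exp ((0:ℂ)*Complex.I)) ((0:ℂ)*Complex.I) := by
      simpa using Complex.hasDerivAt_exp ((0:ℂ)*Complex.I)
    have h4 : HasDerivAt (fun z : ℂ => Complex.exp (z * Complex.I))
        (Complex.exp ((0:ℂ)*Complex.I) * Complex.I) 0 := by
      exact (h3.comp 0 h2)
    have h5 : Complex.exp ((0:ℂ)*Complex.I) = 1 := by simp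
    have h6 : HasDerivAt (fun z : ℂ => φ (Complex.exp (z * Complex.I))) (Dφ * Complex.I) 0 := by
      have := (h5 ▸ hd1 : HasDerivAt φ Dφ (Complex.exp ((0:ℂ)*Complex.I)))
      simpa [h5, Function.comp_def] using this.comp 0 h4
    simpa [hcdef, mul_assoc] using h6.const_mul C
  have htang : HasDerivAt (fun θ : ℝ => (C * φ (Complex.exp ((θ:ℂ) * Complex.I))).re)
      ((c * Complex.I).re) 0 := hinner.real_of_complex
  have hgmax : IsLocalMax (fun θ : ℝ => (C * φ (Complex.exp ((θ:ℂ) * Complex.I))).re) 0 := by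
    apply Filter.Eventually.of_forall
    intro θ
    have hre : (C * φ (Complex.exp ((θ:ℂ) * Complex.I))).re
        ≤ Complex.abs (C * φ (Complex.exp ((θ:ℂ) * Complex.I))) := Complex.re_le_abs _
    rw [map_mul, habsC, one_mul] at hre
    have h7 : C * φ (Complex.exp ((((0:ℝ)):ℂ) * Complex.I)) = 1 := by
      rw [show (((0:ℝ)):ℂ) * Complex.I = 0 by simp, Complex.exp_zero, mul_comm, hCφ1]
    show (C * φ (Complex.exp ((θ:ℂ) * Complex.I))).re
        ≤ (C * φ (Complex.exp ((((0:ℝ)):ℂ) * Complex.I))).re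
    rw [h7, Complex.one_re]
    exact le_trans hre (hb θ)
  have hcim : (c * Complex.I).re = 0 := by
    have := hgmax.deriv_eq_zero
    rwa [htang.deriv] at this
  have hcim' : c.im = 0 := by
    simpa using hcim
  -- radial derivative: c.re ≥ 1
  have hrad : HasDerivAt (fun t : ℝ => (C * φ (t:ℂ)).re) c.re 1 := by
    have h8 : HasDerivAt (fun z : ℂ => C * φ z) c 1 := by
      simpa [hcdef] using hd1.const_mul C
    exact h8.real_of_complex
  have hslope : ∀ t : ℝ, t ∈ Set.Ioo (0:ℝ) 1 →
      1 ≤ slope (fun t : ℝ => (C * φ (t:ℂ)).re) 1 t := by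
    intro t ht
    have hht : (C * φ (t:ℂ)).re ≤ t := by
      have hre : (C * φ (t:ℂ)).re ≤ Complex.abs (C * φ (t:ℂ)) := Complex.re_le_abs _
      rw [map_mul, habsC, one_mul] at hre
      have h9 : Complex.abs (φ (t:ℂ)) ≤ Complex.abs (t:ℂ) := by
        apply hschwarz
        rw [Complex.abs_ofReal, abs_of_pos ht.1]; exact ht.2
      rw [Complex.abs_ofReal, abs_of_pos ht.1] at h9
      linarith
    have h10 : C * φ (((1:ℝ)):ℂ) = 1 := by
      rw [show (((1:ℝ)):ℂ) = (1:ℂ) by norm_num, mul_comm, hCφ1]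
    rw [slope_def_field, h10, Complex.one_re,
      le_div_iff_of_neg (by linarith [ht.2] : t - 1 < 0)]
    linarith
  have hcre : 1 ≤ c.re := by
    haveI hne : (nhdsWithin (1:ℝ) (Set.Ioo (0:ℝ) 1)).NeBot := by
      apply mem_closure_iff_nhdsWithin_neBot.mp
      rw [closure_Ioo (by norm_num : (0:ℝ) ≠ 1)]
      exact Set.right_mem_Icc.mpr (by norm_num)
    have htends : Filter.Tendsto (slope (fun t : ℝ => (C * φ (t:ℂ)).re) 1)
        (nhdsWithin 1 (Set.Ioo (0:ℝ) 1)) (nhds c.re) := by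
      have := (hrad.hasDerivWithinAt (s := Set.Ioo (0:ℝ) 1))
      rw [hasDerivWithinAt_iff_tendsto_slope] at this
      have hsub : Set.Ioo (0:ℝ) 1 ⊆ Set.Ioo (0:ℝ) 1 \ {1} := by
        intro y hy; exact ⟨hy, by simp; linarith [hy.2]⟩
      exact this.mono_left (nhdsWithin_mono _ hsub)
    exact ge_of_tendsto htends (by
      filter_upwards [self_mem_nhdsWithin] with t ht
      exact hslope t ht)
  refine ⟨c.re, hcre, ?_⟩
  have hc : c = (c.re : ℂ) := by
    apply Complex.ext <;> simp [hcim']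
  calc Dφ = (φ 1 * C) * Dφ := by rw [hCφ1, one_mul]
    _ = c * φ 1 := by rw [hcdef]; ring
    _ = (c.re : ℂ) * φ 1 := by rw [← hc]


-- helper: the Möbius bound
lemma mobius_lt (α : ℝ) (hα1 : α < 1) (P : ℂ) (h : α < P.re) :
    Complex.abs ((P - 1)/(P + ((1:ℝ) - 2*α : ℝ))) < 1 := by
  have hden : (0:ℝ) < (P + ((1:ℝ) - 2*α : ℝ)).re := by
    simp only [Complex.add_re, Complex.ofReal_re]
    linarith
  have hdne : P + ((1:ℝ) - 2*α : ℝ) ≠ 0 := by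
    intro h'; rw [h'] at hden; simp at hden
  rw [map_div₀, div_lt_one (Complex.abs.pos hdne)]
  have h2 : Complex.normSq (P - 1) < Complex.normSq (P + ((1:ℝ) - 2*α : ℝ)) := by
    simp only [Complex.normSq_apply, Complex.sub_re, Complex.sub_im, Complex.add_re,
      Complex.add_im, Complex.one_re, Complex.one_im, Complex.ofReal_re, Complex.ofReal_im]
    nlinarith [sq_nonneg (P.im)]
  have := Real.sqrt_lt_sqrt (Complex.normSq_nonneg _) h2
  rwa [← Complex.abs_apply, ← Complex.abs_apply] at this

lemma mobius_le (α : ℝ) (hα1 : α < 1) (P : ℂ) (h : α ≤ P.re) :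
    Complex.abs ((P - 1)/(P + ((1:ℝ) - 2*α : ℝ))) ≤ 1 := by
  have hden : (0:ℝ) < (P + ((1:ℝ) - 2*α : ℝ)).re := by
    simp only [Complex.add_re, Complex.ofReal_re]
    linarith
  have hdne : P + ((1:ℝ) - 2*α : ℝ) ≠ 0 := by
    intro h'; rw [h'] at hden; simp at hden
  rw [map_div₀, div_le_one (Complex.abs.pos hdne)]
  have h2 : Complex.normSq (P - 1) ≤ Complex.normSq (P + ((1:ℝ) - 2*α : ℝ)) := by
    simp only [Complex.normSq_apply, Complex.sub_re, Complex.sub_im, Complex.add_re,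
      Complex.add_im, Complex.one_re, Complex.one_im, Complex.ofReal_re, Complex.ofReal_im]
    nlinarith [sq_nonneg (P.im)]
  have := Real.sqrt_le_sqrt h2
  rwa [← Complex.abs_apply, ← Complex.abs_apply] at this

lemma mobius_eq (α : ℝ) (hα1 : α < 1) (P : ℂ) (h : P.re = α) (hne : P ≠ 1) :
    Complex.abs ((P - 1)/(P + ((1:ℝ) - 2*α : ℝ))) = 1 := by
  have hden : (0:ℝ) < (P + ((1:ℝ) - 2*α : ℝ)).re := by
    simp only [Complex.add_re, Complex.ofReal_re]
    linarith
  have hdne : P + ((1:ℝ) - 2*α : ℝ) ≠ 0 := by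
    intro h'; rw [h'] at hden; simp at hden
  rw [map_div₀, div_eq_one_iff_eq (Complex.abs.ne_zero hdne)]
  have h2 : Complex.normSq (P - 1) = Complex.normSq (P + ((1:ℝ) - 2*α : ℝ)) := by
    simp only [Complex.normSq_apply, Complex.sub_re, Complex.sub_im, Complex.add_re,
      Complex.add_im, Complex.one_re, Complex.one_im, Complex.ofReal_re, Complex.ofReal_im]
    nlinarith [sq_nonneg (P.im)]
  rw [Complex.abs_apply, Complex.abs_apply, h2]


end AuxLemmasForStmt1

open Topology in
theorem stmt1 (α : ℝ) (hα0 : 0 ≤ α) (hα1 : α < 1) (f : ℂ → ℂ)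
    (hf : IsClassA f)
    (hf0 : ∀ z ∈ 𝔻, z ≠ 0 → f z ≠ 0)
    (hf' : ∀ z ∈ 𝔻, deriv f z ≠ 0)
    (hsub : Subordinate (fun z => f z * deriv (deriv f) z / (deriv f z) ^ 2)
      (fun z => 2 * (1 - (α:ℂ)) * ((1 - 2*(α:ℂ)) * z^2 + 2*z) / (1 + (1 - 2*(α:ℂ)) * z)^2)) :
    ∀ z ∈ 𝔻, α < ((if z = 0 then 1 else z * deriv f z / f z : ℂ)).re := by
  obtain ⟨hfd, hf00, hf'rule⟩ := hf
  obtain ⟨W, hWd, hW0, hWmap, hWeq⟩ := hsub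
  have hDopen : IsOpen 𝔻 := isOpen_ball
  have hmem : ∀ {w : ℂ}, w ∈ 𝔻 ↔ Complex.abs w < 1 := by
    intro w; rw [𝔻, mem_ball_zero_iff, Complex.norm_eq_abs]
  -- the function q = dslope f 0  (analytic extension of f z / z)
  have hq : DifferentiableOn ℂ (dslope f 0) 𝔻 := by
    exact (Complex.differentiableOn_dslope (by rw [𝔻]; exact ball_mem_nhds 0 one_pos)).mpr hfd
  have hq0 : dslope f 0 0 = 1 := by rw [dslope_same]; exact hf'rule
  have hqz : ∀ z : ℂ, z ≠ 0 → dslope f 0 z = f z / z := by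
    intro z hz
    rw [dslope_of_ne f hz, slope_def_field, hf00, sub_zero, sub_zero]
  have hqne : ∀ z ∈ 𝔻, dslope f 0 z ≠ 0 := by
    intro z hz
    by_cases h : z = 0
    · rw [h, hq0]; exact one_ne_zero
    · rw [hqz z h]; exact div_ne_zero (hf0 z hz h) h
  -- p = deriv f / q
  set p : ℂ → ℂ := fun z => deriv f z / dslope f 0 z with hpdef
  have hfa : AnalyticOnNhd ℂ f 𝔻 := hfd.analyticOnNhd hDopen
  have hf'd : DifferentiableOn ℂ (deriv f) 𝔻 := (hfa.deriv).differentiableOn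
  have hpd : DifferentiableOn ℂ p 𝔻 := hf'd.div hq hqne
  have hp0 : p 0 = 1 := by rw [hpdef]; simp only; rw [hq0, hf'rule]; norm_num
  have hpz : ∀ z ∈ 𝔻, z ≠ 0 → p z = z * deriv f z / f z := by
    intro z hz hz0
    rw [hpdef]; simp only
    rw [hqz z hz0]
    field_simp
  intro z hz
  by_cases hz0 : z = 0
  · rw [if_pos hz0]; simpa using hα1
  rw [if_neg hz0, ← hpz z hz hz0]
  by_contra hcon
  push_neg at hcon
  -- find minimal modulus point z₀ with re p ≤ α
  have hzlt : Complex.abs z < 1 := hmem.mp hz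
  have hKsub : closedBall (0:ℂ) (Complex.abs z) ⊆ 𝔻 := by
    rw [𝔻]; exact closedBall_subset_ball hzlt
  have hpcont : ContinuousOn (fun w => (p w).re) (closedBall (0:ℂ) (Complex.abs z)) :=
    Complex.continuous_re.comp_continuousOn ((hpd.continuousOn).mono hKsub)
  set S : Set ℂ := closedBall (0:ℂ) (Complex.abs z) ∩ (fun w => (p w).re) ⁻¹' (Iic α) with hSdef
  have hSclosed : IsClosed S :=
    hpcont.preimage_isClosed_of_isClosed Metric.isClosed_closedBall isClosed_Iic
  have hScompact : IsCompact S :=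
    (isCompact_closedBall _ _).of_isClosed_subset hSclosed inter_subset_left
  have hSne : S.Nonempty := ⟨z, by
    constructor
    · rw [mem_closedBall_zero_iff, Complex.norm_eq_abs]
    · exact hcon⟩
  obtain ⟨z₀, hz₀S, hz₀min⟩ := hScompact.exists_isMinOn hSne continuous_norm.continuousOn
  have hz₀D : z₀ ∈ 𝔻 := hKsub hz₀S.1
  have hz₀re : (p z₀).re ≤ α := hz₀S.2
  have hz₀ne : z₀ ≠ 0 := by
    intro h
    rw [h, hp0] at hz₀re
    simp at hz₀re; linarith
  set r₀ : ℝ := Complex.abs z₀ with hr₀def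
  have hr₀pos : 0 < r₀ := Complex.abs.pos hz₀ne
  have hr₀lt : r₀ < 1 := hmem.mp hz₀D
  have hr₀le : r₀ ≤ Complex.abs z := by
    have := hz₀S.1
    rwa [mem_closedBall_zero_iff, Complex.norm_eq_abs] at this
  -- strict inequality strictly inside radius r₀
  have hin : ∀ w : ℂ, Complex.abs w < r₀ → α < (p w).re := by
    intro w hw
    by_contra hcc
    push_neg at hcc
    have hwS : w ∈ S := ⟨by rw [mem_closedBall_zero_iff, Complex.norm_eq_abs]; linarith, hcc⟩
    have h2 := hz₀min hwS
    simp only [Complex.norm_eq_abs] at h2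
    rw [← hr₀def] at h2
    have h3 : r₀ ≤ Complex.abs w := h2
    linarith
  -- non-strict inequality on the closed ball of radius r₀
  have hle : ∀ w : ℂ, Complex.abs w ≤ r₀ → α ≤ (p w).re := by
    intro w hw
    rcases lt_or_eq_of_le hw with h | h
    · exact le_of_lt (hin w h)
    · -- |w| = r₀ : approximate radially
      have hwD : w ∈ 𝔻 := hmem.mpr (by rw [← h] at hr₀lt; exact hr₀lt)
      have hpc : ContinuousAt p w :=
        (hpd.differentiableAt (hDopen.mem_nhds hwD)).continuousAt
      have htt : Filter.Tendsto (fun t : ℝ => (p ((t:ℂ) * w)).re) (nhdsWithin 1 (Iio 1))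
          (nhds ((p w).re)) := by
        have hcont1 : Filter.Tendsto (fun t : ℝ => (t:ℂ) * w) (nhds 1) (nhds w) := by
          have : Continuous (fun t : ℝ => (t:ℂ) * w) :=
            (Complex.continuous_ofReal.mul continuous_const)
          have h4 := this.tendsto 1
          simpa using h4
        exact ((Complex.continuous_re.tendsto _).comp (hpc.tendsto.comp hcont1)).mono_left
          nhdsWithin_le_nhds
      apply ge_of_tendsto htt
      filter_upwards [Ioo_mem_nhdsLT_of_mem
        (by constructor <;> norm_num : (1:ℝ) ∈ Ioc (0:ℝ) 1)] with t ht
      apply le_of_lt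
      apply hin
      rw [map_mul, Complex.abs_ofReal, ← h, abs_of_pos ht.1]
      nlinarith [ht.2, hr₀pos, (by rw [← h] : Complex.abs w = r₀)]
  -- p z₀ has real part exactly α
  have hre0 : (p z₀).re = α := le_antisymm hz₀re (hle z₀ le_rfl)
  set β : ℝ := 1 - 2*α with hβdef
  have hβ1 : -1 < β := by rw [hβdef]; linarith
  have hβ2 : β ≤ 1 := by rw [hβdef]; linarith
  have h1β : (0:ℝ) < 1 + β := by rw [hβdef]; linarith
  -- the transferred function ω and φ
  set ω : ℂ → ℂ := fun v => (p v - 1)/(p v + (β:ℂ)) with hωdef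
  set φ : ℂ → ℂ := fun ζ => ω (z₀ * ζ) with hφdef
  have hpne : ∀ v : ℂ, α ≤ (p v).re → p v + (β:ℂ) ≠ 0 := by
    intro v hv h
    have h2 : (p v + (β:ℂ)).re = 0 := by rw [h]; simp
    simp only [Complex.add_re, Complex.ofReal_re] at h2
    rw [hβdef] at h2
    linarith
  have hφdiff : ∀ ζ : ℂ, Complex.abs ζ ≤ 1 → DifferentiableAt ℂ φ ζ := by
    intro ζ hζ
    have hmem2 : z₀ * ζ ∈ 𝔻 := by
      rw [hmem, map_mul]
      calc Complex.abs z₀ * Complex.abs ζ ≤ r₀ * 1 := by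
            apply mul_le_mul_of_nonneg_left hζ (Complex.abs.nonneg _)
        _ < 1 := by rw [mul_one]; exact hr₀lt
    have hpdiff : DifferentiableAt ℂ p (z₀ * ζ) := hpd.differentiableAt (hDopen.mem_nhds hmem2)
    have hplea : α ≤ (p (z₀*ζ)).re := by
      apply hle
      rw [map_mul]
      calc Complex.abs z₀ * Complex.abs ζ ≤ r₀ * 1 :=
            mul_le_mul_of_nonneg_left hζ (Complex.abs.nonneg _)
        _ = r₀ := mul_one r₀
    have hωdiff : DifferentiableAt ℂ ω (z₀ * ζ) := by
      rw [hωdef]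
      exact (hpdiff.sub_const 1).div (hpdiff.add_const _) (hpne _ hplea)
    rw [hφdef]
    exact hωdiff.comp ζ ((differentiableAt_id.const_mul z₀))
  -- Jack's lemma hypotheses
  have hφ0 : φ 0 = 0 := by
    rw [hφdef, hωdef]; simp only [mul_zero]; rw [hp0]; simp
  have hφmaps : ∀ ζ : ℂ, Complex.abs ζ < 1 → Complex.abs (φ ζ) < 1 := by
    intro ζ hζ
    rw [hφdef, hωdef]
    simp only
    exact mobius_lt α hα1 _ (hin _ (by
      rw [map_mul]
      calc Complex.abs z₀ * Complex.abs ζ < r₀ * 1 := by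
            apply mul_lt_mul_of_pos_left hζ hr₀pos
        _ = r₀ := mul_one r₀))
  have hφb : ∀ θ : ℝ, Complex.abs (φ (Complex.exp (θ*Complex.I))) ≤ 1 := by
    intro θ
    rw [hφdef, hωdef]
    simp only
    apply mobius_le α hα1
    apply hle
    rw [map_mul, Complex.abs_exp_ofReal_mul_I, mul_one]
  have hp₀ne1 : p z₀ ≠ 1 := by
    intro h
    rw [h] at hre0
    simp at hre0
    linarith
  have hφ1 : Complex.abs (φ 1) = 1 := by
    rw [hφdef, hωdef]
    simp only [mul_one]
    exact mobius_eq α hα1 _ hre0 hp₀ne1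
  -- derivative of φ at 1
  have hz₀𝔻 : z₀ ∈ 𝔻 := hz₀D
  have hp₀diff : DifferentiableAt ℂ p z₀ := hpd.differentiableAt (hDopen.mem_nhds hz₀𝔻)
  set P : ℂ := p z₀ with hPdef
  set P' : ℂ := deriv p z₀ with hP'def
  have hPB : P + (β:ℂ) ≠ 0 := hpne z₀ (le_of_eq hre0.symm)
  have hωD : HasDerivAt ω ((P' * (P + (β:ℂ)) - (P - 1) * P')/(P + (β:ℂ))^2) z₀ := by
    rw [hωdef]
    exact ((hp₀diff.hasDerivAt.sub_const 1).div (hp₀diff.hasDerivAt.add_const _) hPB)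
  have hφD : HasDerivAt φ ((P' * (P + (β:ℂ)) - (P - 1) * P')/(P + (β:ℂ))^2 * z₀) 1 := by
    rw [hφdef]
    have hlin : HasDerivAt (fun ζ : ℂ => z₀ * ζ) z₀ 1 := by
      simpa using (hasDerivAt_id (1:ℂ)).const_mul z₀
    have := hωD
    rw [show z₀ = z₀ * 1 by ring] at this
    simpa [Function.comp_def] using (this.comp 1 hlin)
  -- apply Jack's lemma
  obtain ⟨k, hk1, hkeq⟩ := jack
    (fun ζ hζ => (hφdiff ζ (le_of_lt (by rwa [mem_ball_zero_iff, Complex.norm_eq_abs] at hζ))).differentiableWithinAt)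
    hφD hφmaps hφb hφ0 hφ1
  set U : ℂ := φ 1 with hUdef
  have hU : U = (P - 1)/(P + (β:ℂ)) := by rw [hUdef, hφdef, hωdef]; simp [hPdef]
  have habsU : Complex.abs U = 1 := hφ1
  -- facts at z₀
  have hfz₀ : f z₀ ≠ 0 := hf0 z₀ hz₀D hz₀ne
  have hf'z₀ : deriv f z₀ ≠ 0 := hf' z₀ hz₀D
  set F0 : ℂ := f z₀ with hF0def
  set F1 : ℂ := deriv f z₀ with hF1def
  set F2 : ℂ := deriv (deriv f) z₀ with hF2def
  have hPform : P = z₀ * F1 / F0 := by rw [hPdef]; exact hpz z₀ hz₀D hz₀ne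
  have hPne0 : P ≠ 0 := by
    rw [hPform]
    exact div_ne_zero (mul_ne_zero hz₀ne hf'z₀) hfz₀
  -- derivative of p at z₀ explicitly
  have hd2 : HasDerivAt (deriv f) F2 z₀ := (hf'd.differentiableAt (hDopen.mem_nhds hz₀D)).hasDerivAt
  have hd1f : HasDerivAt f F1 z₀ := (hfd.differentiableAt (hDopen.mem_nhds hz₀D)).hasDerivAt
  have hev : p =ᶠ[nhds z₀] fun v => v * deriv f v / f v := by
    filter_upwards [eventually_ne_nhds hz₀ne] with v hv
    rw [hpdef]
    simp only
    rw [hqz v hv, div_div_eq_mul_div, mul_comm]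
  have hgD : HasDerivAt (fun v => v * deriv f v / f v)
      (((1*F1 + z₀*F2)*F0 - z₀*F1*F1)/F0^2) z₀ :=
    ((hasDerivAt_id z₀).mul hd2).div hd1f hfz₀
  have hpD : HasDerivAt p (((1*F1 + z₀*F2)*F0 - z₀*F1*F1)/F0^2) z₀ :=
    hgD.congr_of_eventuallyEq hev
  have hP'eq : P' = ((1*F1 + z₀*F2)*F0 - z₀*F1*F1)/F0^2 := by rw [hP'def]; exact hpD.deriv
  -- cleared-denominator equations
  have he1 : P * F0 = z₀ * F1 := by
    rw [hPform]; field_simp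
  have he2 : P' * F0^2 = (1*F1 + z₀*F2)*F0 - z₀*F1*F1 := by
    rw [hP'eq]; field_simp
  -- the subordination point
  set w : ℂ := W z₀ with hwdef
  have habsw : Complex.abs w < 1 := hmem.mp (hWmap z₀ hz₀D)
  have hBw : 1 + (β:ℂ)*w ≠ 0 := by
    intro h
    have h2 : Complex.abs ((β:ℂ)*w) < 1 := by
      rw [map_mul, Complex.abs_ofReal]
      have hble : |β| ≤ 1 := abs_le.mpr ⟨by linarith, hβ2⟩
      nlinarith [Complex.abs.nonneg w]
    have h3 : (β:ℂ)*w = -1 := by linear_combination h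
    rw [h3] at h2; simp at h2
  have hcast : (1 : ℂ) - 2*(α:ℂ) = ((β:ℝ):ℂ) := by rw [hβdef]; push_cast; ring
  have he5 : F0*F2*(1+(β:ℂ)*w)^2 = (1+(β:ℂ))*((β:ℂ)*w^2+2*w)*F1^2 := by
    have h5 := hWeq z₀ hz₀D
    simp only at h5
    rw [hcast] at h5
    rw [← hwdef] at h5
    have h6 : (2 : ℂ) * (1 - (α:ℂ)) = 1 + (β:ℂ) := by rw [hβdef]; push_cast; ring
    rw [h6] at h5
    field_simp [hf' z₀ hz₀D] at h5
    linear_combination h5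
  -- make all quantities opaque for the ring computations
  clear_value P P' U F0 F1 F2 w
  have he3 : z₀ * P' * (1+(β:ℂ)) = (k:ℂ) * U * (P+(β:ℂ))^2 := by
    have h5 := hkeq
    rw [div_mul_eq_mul_div, div_eq_iff (pow_ne_zero 2 hPB)] at h5
    linear_combination h5
  -- relations for U
  have hUPB : U * (P + (β:ℂ)) = P - 1 := by
    rw [hU, div_mul_cancel₀ _ hPB]
  have h1BU : (1 + (β:ℂ)*U) * (P + (β:ℂ)) = P * (1+(β:ℂ)) := by
    linear_combination (β:ℂ)*hUPB
  have h1βne : (1 : ℂ) + (β:ℂ) ≠ 0 := by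
    intro h
    have : ((1 + β : ℝ):ℂ) = 0 := by push_cast; linear_combination h
    rw [Complex.ofReal_eq_zero] at this
    linarith
  have hBU_ne : 1 + (β:ℂ)*U ≠ 0 := by
    intro h
    rw [h, zero_mul] at h1BU
    rcases mul_eq_zero.mp h1BU.symm with h' | h'
    · exact hPne0 h'
    · exact h1βne h'
  -- assemble the contradiction equation
  have s1 : z₀*P'*F0^2 = P*F0^2 + z₀^2*F2*F0 - P^2*F0^2 := by
    linear_combination z₀*he2 + (P*F0 + z₀*F1 - F0)*he1
  have s2 : z₀^2*F2*F0*(1+(β:ℂ)*w)^2 = (1+(β:ℂ))*((β:ℂ)*w^2+2*w)*P^2*F0^2 := by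
    linear_combination z₀^2*he5 - (1+(β:ℂ))*((β:ℂ)*w^2+2*w)*(P*F0+z₀*F1)*he1
  have s3 : z₀*P'*F0^2*(1+(β:ℂ)*w)^2
      = (P*(1+(β:ℂ)*w)^2 + (1+(β:ℂ))*((β:ℂ)*w^2+2*w)*P^2 - P^2*(1+(β:ℂ)*w)^2)*F0^2 := by
    linear_combination (1+(β:ℂ)*w)^2*s1 + s2
  have s4 : (k:ℂ)*U*(P+(β:ℂ))^2*(1+(β:ℂ)*w)^2*F0^2
      = (1+(β:ℂ))*(P*(1+(β:ℂ)*w)^2 + (1+(β:ℂ))*((β:ℂ)*w^2+2*w)*P^2 - P^2*(1+(β:ℂ)*w)^2)*F0^2 := by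
    linear_combination (1+(β:ℂ))*s3 - (1+(β:ℂ)*w)^2*F0^2*he3
  have s5 : (U*(1 + (β:ℂ)*U + (k:ℂ))*(1+(β:ℂ)*w)^2 - w*((β:ℂ)*w+2)*(1+(β:ℂ)*U)^2)
      * ((P+(β:ℂ))^2*F0^2) = 0 := by
    linear_combination F0^2*(1+(β:ℂ)*w)^2*((1+(β:ℂ)*U)*(P+(β:ℂ)))*hUPB
      + F0^2*(1+(β:ℂ)*w)^2*(P-1)*h1BU + s4
      - F0^2*w*((β:ℂ)*w+2)*((1+(β:ℂ)*U)*(P+(β:ℂ))+P*(1+(β:ℂ)))*h1BU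
  have hT : U*(1 + (β:ℂ)*U + (k:ℂ))*(1+(β:ℂ)*w)^2 = w*((β:ℂ)*w+2)*(1+(β:ℂ)*U)^2 := by
    have hne : (P+(β:ℂ))^2*F0^2 ≠ 0 := mul_ne_zero (pow_ne_zero 2 hPB) (pow_ne_zero 2 hfz₀)
    have h6 := (mul_eq_zero.mp s5).resolve_right hne
    linear_combination h6
  exact noSolution β k U w hβ1 hβ2 habsU hBU_ne habsw hk1 hT
end
end

section
/- Let ψ be a Ma-Minda function that extends to a continuous injective map on the closed unit disk. Let f ∈ 𝒜 with f(z) ≠ 0 for z ∈ 𝔻\{0}. Then f ∈ S*(ψ) if and only if for every z ∈ 𝔻\{0} and every t ∈ [0, 2π), z f'(z) − ψ(e^{it}) f(z) ≠ 0. -/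
open Complex Metric Set

noncomputable section
open Filter Topology

lemma strictDerivAt_of_analyticAt {h : ℂ → ℂ} {x : ℂ} (ha : AnalyticAt ℂ h x) :
    HasStrictDerivAt h (deriv h x) x := by
  obtain ⟨p, hp⟩ := ha
  have h1 := hp.hasStrictDerivAt
  rw [h1.hasDerivAt.deriv]
  exact h1

lemma deriv_ne_zero_of_injOn {ψ : ℂ → ℂ} {s : Set ℂ} (hs : IsOpen s)
    (hd : DifferentiableOn ℂ ψ s) (hi : Set.InjOn ψ s) {b : ℂ} (hb : b ∈ s) :
    deriv ψ b ≠ 0 := by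
  intro hzero
  have hA : AnalyticOnNhd ℂ ψ s := hd.analyticOnNhd hs
  have hFa : AnalyticAt ℂ (fun z => ψ z - ψ b) b := (hA b hb).sub analyticAt_const
  have hne : ¬ ∀ᶠ z in 𝓝 b, ψ z - ψ b = 0 := by
    intro h
    have h3 : ∀ᶠ z in 𝓝[≠] b, ψ z - ψ b = 0 ∧ z ∈ s :=
      eventually_nhdsWithin_of_eventually_nhds (h.and (hs.eventually_mem hb))
    obtain ⟨z, ⟨h1, h2⟩, hz⟩ := (h3.and self_mem_nhdsWithin).exists
    exact hz (hi h2 hb (sub_eq_zero.mp h1))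
  obtain ⟨n, g, hg_an, hg_ne, hg_eq⟩ := hFa.exists_eventuallyEq_pow_smul_nonzero_iff.mpr hne
  have hg_eq' : ∀ᶠ z in 𝓝 b, ψ z - ψ b = (z - b) ^ n * g z := by
    filter_upwards [hg_eq] with z hz; simpa [smul_eq_mul] using hz
  have hn0 : n ≠ 0 := by
    intro h
    have h2 := hg_eq'.self_of_nhds
    simp [h] at h2
    exact hg_ne h2.symm
  have hn1 : n ≠ 1 := by
    intro h; subst h
    have hEE : (fun z => ψ z - ψ b) =ᶠ[𝓝 b] (fun z => (z - b) ^ 1 * g z) := hg_eq'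
    have hder : deriv (fun z => ψ z - ψ b) b = 0 := by
      rw [deriv_sub_const, hzero]
    have h2 : deriv (fun z => (z - b) ^ 1 * g z) b = g b := by
      have h1 : HasDerivAt (fun z => (z - b) ^ 1 * g z) (1 * g b + (b - b) * deriv g b) b := by
        simp only [pow_one]; exact (((hasDerivAt_id' b).sub_const b).mul hg_an.differentiableAt.hasDerivAt)
      simpa using h1.deriv
    have h3 := hEE.deriv_eq
    rw [hder, h2] at h3
    exact hg_ne h3.symm
  have hn2 : 2 ≤ n := by omega
  have hnC : (n : ℂ) ≠ 0 := Nat.cast_ne_zero.mpr hn0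
  have hquot : AnalyticAt ℂ (fun z => g z / g b) b := hg_an.div analyticAt_const hg_ne
  have hslit : g b / g b ∈ Complex.slitPlane := by
    rw [div_self hg_ne]; exact Complex.one_mem_slitPlane
  have hlog : AnalyticAt ℂ (fun z => Complex.log (g z / g b) / n) b :=
    (hquot.clog hslit).div analyticAt_const hnC
  set c : ℂ := Complex.exp (Complex.log (g b) / n) with hc
  set k : ℂ → ℂ := fun z => c * Complex.exp (Complex.log (g z / g b) / n) with hk
  have hka : AnalyticAt ℂ k b := analyticAt_const.mul hlog.cexp
  have hkb : k b = c := by simp [hk, div_self hg_ne, Complex.log_one]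
  have hc0 : c ≠ 0 := Complex.exp_ne_zero _
  have hcn : c ^ n = g b := by
    rw [hc, ← Complex.exp_nat_mul, mul_div_cancel₀ _ hnC, Complex.exp_log hg_ne]
  have hgev : ∀ᶠ z in 𝓝 b, g z ≠ 0 := hg_an.continuousAt.eventually_ne hg_ne
  have hkpow : ∀ᶠ z in 𝓝 b, k z ^ n = g z := by
    filter_upwards [hgev] with z hz
    rw [hk]; simp only
    rw [mul_pow, hcn, ← Complex.exp_nat_mul, mul_div_cancel₀ _ hnC,
      Complex.exp_log (div_ne_zero hz hg_ne), mul_div_cancel₀ _ hg_ne]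
  set φ : ℂ → ℂ := fun z => (z - b) * k z with hφ
  have hφa : AnalyticAt ℂ φ b := (analyticAt_id.sub analyticAt_const).mul hka
  have hφd : HasDerivAt φ (1 * k b + (b - b) * deriv k b) b :=
    ((hasDerivAt_id b).sub_const b).mul hka.differentiableAt.hasDerivAt
  have hφd' : deriv φ b = c := by simpa [hkb] using hφd.deriv
  have hφs : HasStrictDerivAt φ (deriv φ b) b := strictDerivAt_of_analyticAt hφa
  have hmap : Filter.map φ (𝓝 b) = 𝓝 (φ b) := hφs.map_nhds_eq (hφd' ▸ hc0)
  have hφb : φ b = 0 := by simp [hφ]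
  have hT : ∀ᶠ z in 𝓝 b, (ψ z - ψ b = φ z ^ n ∧ z ∈ s) := by
    filter_upwards [hg_eq', hkpow, hs.eventually_mem hb] with z h1 h2 h3
    refine ⟨?_, h3⟩
    rw [h1, hφ]; simp only; rw [mul_pow, h2]
  obtain ⟨T, hTnb, hTsub⟩ := hT.exists_mem
  have himg : φ '' T ∈ 𝓝 (0:ℂ) := by
    rw [← hφb, ← hmap]; exact image_mem_map hTnb
  obtain ⟨ε, hε, hball⟩ := Metric.mem_nhds_iff.mp himg
  set ζ : ℂ := Complex.exp (((2 * Real.pi / n : ℝ) : ℂ) * Complex.I) with hζ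
  have hζn : ζ ^ n = 1 := by
    rw [hζ, ← Complex.exp_nat_mul]
    have : (n : ℂ) * (((2 * Real.pi / n : ℝ) : ℂ) * Complex.I) = 2 * Real.pi * Complex.I := by
      push_cast
      field_simp
    rw [this, Complex.exp_two_pi_mul_I]
  have hζ1 : ζ ≠ 1 := by
    rw [hζ, Ne, Complex.exp_eq_one_iff]
    rintro ⟨m, hm⟩
    have him := congrArg Complex.im hm
    simp [Complex.mul_im] at him
    -- him : 2 * π / n = m * (2 * π)
    have hπ : (0:ℝ) < Real.pi := Real.pi_pos
    have hmn : (m : ℝ) * n = 1 := by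
      have hn0' : (n:ℝ) ≠ 0 := Nat.cast_ne_zero.mpr hn0
      field_simp at him
      nlinarith [him]
    have hmn' : m * (n:ℤ) = 1 := by exact_mod_cast hmn
    have : (n:ℤ) ≤ 1 := Int.le_of_dvd one_pos ⟨m, by linarith [hmn']⟩
    omega
  have hζa : ‖ζ‖ = 1 := by
    rw [hζ]; exact Complex.norm_exp_ofReal_mul_I _
  set w : ℂ := ((ε/2 : ℝ) : ℂ) with hw
  have hwa : ‖w‖ = ε / 2 := by
    rw [hw, Complex.norm_real, Real.norm_eq_abs, abs_of_pos (by linarith)]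
  have hw0 : w ≠ 0 := by
    simp [hw]; intro h; linarith
  obtain ⟨z₁, hz₁T, hz₁⟩ : w ∈ φ '' T := hball (by simp [Metric.mem_ball, hwa]; linarith)
  obtain ⟨z₂, hz₂T, hz₂⟩ : ζ * w ∈ φ '' T := by
    refine hball ?_
    simp only [Metric.mem_ball, dist_zero_right, norm_mul, hζa, hwa, one_mul]
    linarith
  have hψ12 : ψ z₁ = ψ z₂ := by
    have a1 := (hTsub z₁ hz₁T).1
    have a2 := (hTsub z₂ hz₂T).1
    have h3 : φ z₁ ^ n = φ z₂ ^ n := by rw [hz₁, hz₂, mul_pow, hζn, one_mul]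
    have h4 := a1.trans (h3.trans a2.symm)
    linear_combination h4
  have hz12 : z₁ = z₂ := hi (hTsub z₁ hz₁T).2 (hTsub z₂ hz₂T).2 hψ12
  rw [hz12, hz₂] at hz₁
  exact hζ1 (mul_right_cancel₀ hw0 (by rw [hz₁, one_mul]))

lemma exists_exp_eq {w : ℂ} (hw : ‖w‖ = 1) :
    ∃ t ∈ Set.Ico (0:ℝ) (2*Real.pi), Complex.exp (Complex.I * t) = w := by
  have h1 : (↑(‖w‖) : ℂ) * Complex.exp (w.arg * Complex.I) = w :=
    Complex.norm_mul_exp_arg_mul_I w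
  rw [hw] at h1
  push_cast at h1
  rw [one_mul] at h1
  have harg := Complex.arg_mem_Ioc w
  have hπ := Real.pi_pos
  by_cases h : 0 ≤ w.arg
  · refine ⟨w.arg, ⟨h, by linarith [harg.2]⟩, ?_⟩
    rw [mul_comm]; exact h1
  · refine ⟨w.arg + 2*Real.pi, ⟨by linarith [harg.1], by linarith⟩, ?_⟩
    have h2 : Complex.I * ((w.arg + 2*Real.pi : ℝ) : ℂ)
        = (w.arg : ℂ) * Complex.I + 2*Real.pi*Complex.I := by push_cast; ring
    rw [h2, Complex.exp_add, Complex.exp_two_pi_mul_I, mul_one, h1]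

theorem stmt2 (ψ f : ℂ → ℂ) (hψ : MaMinda ψ)
    (hψc : ContinuousOn ψ (Metric.closedBall 0 1))
    (hψi : Set.InjOn ψ (Metric.closedBall 0 1))
    (hf : IsClassA f) (hf0 : ∀ z ∈ 𝔻, z ≠ 0 → f z ≠ 0) :
    StarlikeMM ψ f ↔
      ∀ z ∈ 𝔻, z ≠ 0 → ∀ t ∈ Set.Ico (0:ℝ) (2*Real.pi),
        z * deriv f z - ψ (Complex.exp (Complex.I * t)) * f z ≠ 0 := by
  obtain ⟨hψd, hψinj, -, hψ0, -, -, -⟩ := hψ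
  have hop : IsOpen 𝔻 := Metric.isOpen_ball
  have h0D : (0:ℂ) ∈ 𝔻 := by simp [𝔻]
  constructor
  · rintro ⟨-, -, ω, hωd, hω0, hωmem, hωeq⟩ z hz hz0 t ht heq
    have hfz : f z ≠ 0 := hf0 z hz hz0
    have habs : ‖Complex.exp (Complex.I * t)‖ = 1 := by
      rw [Complex.norm_exp]; simp
    have hgz := hωeq z hz
    simp only [if_neg hz0] at hgz
    have hg2 : z * deriv f z / f z = ψ (Complex.exp (Complex.I * t)) := by
      field_simp
      linear_combination heq
    have hψeq : ψ (ω z) = ψ (Complex.exp (Complex.I * t)) := by rw [← hgz, hg2]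
    have hω1 : ω z ∈ Metric.closedBall (0:ℂ) 1 :=
      Metric.ball_subset_closedBall (hωmem z hz)
    have hE : Complex.exp (Complex.I * t) ∈ Metric.closedBall (0:ℂ) 1 := by
      rw [mem_closedBall_zero_iff, habs]
    have h1 := hψi hω1 hE hψeq
    have h2 := hωmem z hz
    rw [h1] at h2
    rw [𝔻, Metric.mem_ball, dist_zero_right, habs] at h2
    exact lt_irrefl 1 h2
  · intro H
    refine ⟨hf, hf0, ?_⟩
    obtain ⟨hfd, hf00, hf'0⟩ := hf
    have hnhds : 𝔻 ∈ 𝓝 (0:ℂ) := hop.mem_nhds h0D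
    set d : ℂ → ℂ := dslope f 0 with hd
    have hdd : DifferentiableOn ℂ d 𝔻 := (Complex.differentiableOn_dslope hnhds).mpr hfd
    have hd0 : d 0 = 1 := by rw [hd, dslope_same, hf'0]
    have hdz : ∀ z ∈ 𝔻, z ≠ 0 → d z = f z / z := by
      intro z hz hz0
      rw [hd, dslope_of_ne f hz0, slope_def_field, hf00, sub_zero, sub_zero]
    have hdne : ∀ z ∈ 𝔻, d z ≠ 0 := by
      intro z hz
      rcases eq_or_ne z 0 with rfl | hz0
      · rw [hd0]; exact one_ne_zero
      · rw [hdz z hz hz0]; exact div_ne_zero (hf0 z hz hz0) hz0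
    set G : ℂ → ℂ := fun z => deriv f z / d z with hG
    have hderivd : DifferentiableOn ℂ (deriv f) 𝔻 :=
      ((hfd.analyticOnNhd hop).deriv).differentiableOn
    have hGd : DifferentiableOn ℂ G 𝔻 := hderivd.div hdd hdne
    have hGc : ContinuousOn G 𝔻 := hGd.continuousOn
    have hG0 : G 0 = ψ 0 := by
      rw [hG]; simp only; rw [hd0, hf'0, hψ0, div_one]
    have hGg : ∀ z ∈ 𝔻, (if z = 0 then (1:ℂ) else z * deriv f z / f z) = G z := by
      intro z hz
      rcases eq_or_ne z 0 with rfl | hz0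
      · rw [if_pos rfl, hG]; simp only; rw [hd0, hf'0, div_one]
      · rw [if_neg hz0, hG]; simp only
        rw [hdz z hz hz0]
        rw [div_div_eq_mul_div, mul_comm]
    have hGs : ∀ z ∈ 𝔻, G z ∉ ψ '' (Metric.sphere 0 1) := by
      rintro z hz ⟨w, hw, hwe⟩
      have hwa : ‖w‖ = 1 := by
        have := mem_sphere_zero_iff_norm.mp hw
        exact this
      obtain ⟨t, ht, hte⟩ := exists_exp_eq hwa
      rcases eq_or_ne z 0 with rfl | hz0
      · have heq : ψ w = ψ 0 := by rw [hwe, hG0]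
        have hwc : w ∈ Metric.closedBall (0:ℂ) 1 := by
          rw [mem_closedBall_zero_iff, hwa]
        have h0c : (0:ℂ) ∈ Metric.closedBall (0:ℂ) 1 := by
          rw [mem_closedBall_zero_iff]; simp
        have h2 := hψi hwc h0c heq
        rw [h2] at hwa
        simp at hwa
      · have h3 := H z hz hz0 t ht
        rw [hte] at h3
        apply h3
        have h5 : z * deriv f z / f z = ψ w := by
          rw [hwe, ← hGg z hz, if_neg hz0]
        have h6 := (div_eq_iff (hf0 z hz hz0)).mp h5
        rw [h6]; ring
    have hA : AnalyticOnNhd ℂ ψ 𝔻 := hψd.analyticOnNhd hop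
    have hpre : IsPreconnected 𝔻 := (convex_ball (0:ℂ) 1).isPreconnected
    have hopen : IsOpen (ψ '' 𝔻) := by
      rcases hA.is_constant_or_isOpen hpre with ⟨w, hw⟩ | h
      · exfalso
        have h05 : (1/2 : ℂ) ∈ 𝔻 := by
          rw [𝔻, Metric.mem_ball, dist_zero_right]
          norm_num
        have h7 := hψinj h0D h05 (by rw [hw 0 h0D, hw _ h05])
        norm_num at h7
      · exact h 𝔻 subset_rfl hop
    have hclos : closure (ψ '' 𝔻) ⊆ ψ '' Metric.closedBall 0 1 :=
      closure_minimal (Set.image_mono (f := ψ) Metric.ball_subset_closedBall)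
        ((isCompact_closedBall 0 1).image_of_continuousOn hψc).isClosed
    have hmem : ∀ z ∈ 𝔻, G z ∈ ψ '' 𝔻 := by
      have hsub : G '' 𝔻 ⊆ ψ '' 𝔻 := by
        refine (hpre.image G hGc).subset_left_of_subset_union hopen
          isClosed_closure.isOpen_compl
          (disjoint_compl_right.mono_left subset_closure) ?_ ?_
        · rintro y ⟨z, hz, rfl⟩
          by_cases hy : G z ∈ closure (ψ '' 𝔻)
          · left
            obtain ⟨x, hx, hxe⟩ := hclos hy
            rcases lt_or_eq_of_le (Metric.mem_closedBall.mp hx) with h1 | h1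
            · exact ⟨x, Metric.mem_ball.mpr h1, hxe⟩
            · exact absurd ⟨x, Metric.mem_sphere.mpr h1, hxe⟩ (hGs z hz)
          · right; exact hy
        · exact ⟨ψ 0, ⟨0, h0D, hG0⟩, ⟨0, h0D, rfl⟩⟩
      intro z hz; exact hsub ⟨z, hz, rfl⟩
    set ω : ℂ → ℂ := fun z => Function.invFunOn ψ 𝔻 (G z) with hω
    have hωspec : ∀ z ∈ 𝔻, ω z ∈ 𝔻 ∧ ψ (ω z) = G z := by
      intro z hz
      obtain ⟨x, hx, hxe⟩ := hmem z hz
      exact ⟨Function.invFunOn_mem ⟨x, hx, hxe⟩, Function.invFunOn_eq ⟨x, hx, hxe⟩⟩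
    have hω0 : ω 0 = 0 := by
      apply hψinj ((hωspec 0 h0D).1) h0D
      rw [(hωspec 0 h0D).2, hG0]
    have hωdiff : DifferentiableOn ℂ ω 𝔻 := by
      intro a ha
      have hb : ω a ∈ 𝔻 := (hωspec a ha).1
      have hba : AnalyticAt ℂ ψ (ω a) := hA _ hb
      have hstrict : HasStrictDerivAt ψ (deriv ψ (ω a)) (ω a) :=
        strictDerivAt_of_analyticAt hba
      have hne : deriv ψ (ω a) ≠ 0 := deriv_ne_zero_of_injOn hop hψd hψinj hb
      have hEd := hstrict.hasStrictFDerivAt_equiv hne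
      have hGa : ContinuousAt G a := hGc.continuousAt (hop.mem_nhds ha)
      have hGab : G a = ψ (ω a) := ((hωspec a ha).2).symm
      have hrinv : ∀ᶠ z in 𝓝 a, ψ (hEd.localInverse ψ _ (ω a) (G z)) = G z := by
        have h1 := hEd.eventually_right_inverse
        rw [← hGab] at h1
        exact hGa.eventually h1
      have hφGa : hEd.localInverse ψ _ (ω a) (G a) = ω a := by
        rw [hGab]; exact hEd.localInverse_apply_image
      have hφcont : ContinuousAt (fun z => hEd.localInverse ψ _ (ω a) (G z)) a := by
        have h2 := hEd.localInverse_continuousAt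
        rw [← hGab] at h2
        exact h2.comp hGa
      have hmemD : ∀ᶠ z in 𝓝 a, hEd.localInverse ψ _ (ω a) (G z) ∈ 𝔻 :=
        hφcont.eventually_mem (hop.mem_nhds (by rw [hφGa]; exact hb))
      have hEq : ω =ᶠ[𝓝 a] fun z => hEd.localInverse ψ _ (ω a) (G z) := by
        filter_upwards [hrinv, hmemD, hop.eventually_mem ha] with z h1 h2 h3
        exact hψinj ((hωspec z h3).1) h2 (by rw [(hωspec z h3).2, h1])
      have hdiff : DifferentiableAt ℂ (fun z => hEd.localInverse ψ _ (ω a) (G z)) a := by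
        have hφdiff : DifferentiableAt ℂ (hEd.localInverse ψ _ (ω a)) (G a) := by
          have h4 := hEd.to_localInverse.differentiableAt
          rwa [← hGab] at h4
        exact hφdiff.comp a (hGd.differentiableAt (hop.mem_nhds ha))
      exact (hEq.differentiableAt_iff.mpr hdiff).differentiableWithinAt
    refine ⟨ω, hωdiff, hω0, fun z hz => (hωspec z hz).1, fun z hz => ?_⟩
    simp only
    rw [hGg z hz]
    exact ((hωspec z hz).2).symm
end
end

section
/- Let ψ be a Ma-Minda function that extends to a continuous injective map on the closed unit disk. Let f(z) = z + Σ_{k≥2} a_k z^k ∈ 𝒜 with f(z) ≠ 0 for z ∈ 𝔻\{0}. If for every t ∈ [0, 2π) one has Σ_{k=2}^∞ |(k − ψ(e^{it}))/(1 − ψ(e^{it}))| · |a_k| ≤ 1 (note ψ(e^{it}) ≠ 1 since ψ is injective on the closed disk and ψ(0) = 1), then f ∈ S*(ψ). -/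
open Complex Metric Set Filter Topology
open scoped NNReal ENNReal

noncomputable section

/-- An injective holomorphic function on the unit disk has nonvanishing derivative. -/
lemma deriv_ne_zero_of_injOn_s3 {ψ : ℂ → ℂ} (hd : DifferentiableOn ℂ ψ 𝔻)
    (hi : Set.InjOn ψ 𝔻) {z₀ : ℂ} (hz₀ : z₀ ∈ 𝔻) : deriv ψ z₀ ≠ 0 := by
  have hop : IsOpen 𝔻 := isOpen_ball
  have hψa : AnalyticAt ℂ ψ z₀ := hd.analyticAt (hop.mem_nhds hz₀)
  intro h0
  have hFa : AnalyticAt ℂ (fun z => ψ z - ψ z₀) z₀ := hψa.sub analyticAt_const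
  have hne : ¬ (∀ᶠ z in 𝓝 z₀, ψ z - ψ z₀ = 0) := by
    intro h
    obtain ⟨ε, hε, hball⟩ := Metric.eventually_nhds_iff.mp (h.and (hop.eventually_mem hz₀))
    set z₁ : ℂ := z₀ + ((ε/2 : ℝ) : ℂ) with hz₁def
    have hdist : dist z₁ z₀ < ε := by
      rw [dist_eq_norm]
      have : z₁ - z₀ = ((ε/2 : ℝ) : ℂ) := by ring
      rw [this, Complex.norm_real]
      rw [Real.norm_eq_abs, abs_of_pos (by linarith)]
      linarith
    obtain ⟨h1, h2⟩ := hball hdist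
    have hz : z₁ = z₀ := hi h2 hz₀ (sub_eq_zero.mp h1)
    rw [hz₁def] at hz
    have : ((ε/2 : ℝ) : ℂ) = 0 := by linear_combination hz
    have : (ε/2 : ℝ) = 0 := by exact_mod_cast this
    linarith
  have htop : analyticOrderAt (fun z => ψ z - ψ z₀) z₀ ≠ ⊤ := by rw [Ne, analyticOrderAt_eq_top]; exact hne
  obtain ⟨m, hm⟩ := (WithTop.ne_top_iff_exists).mp htop
  obtain ⟨h, hha, hh0, hhe⟩ := (hFa.analyticOrderAt_eq_natCast (n := m)).mp hm.symm
  have hm0 : m ≠ 0 := by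
    rintro rfl
    have := hhe.self_of_nhds
    simp only [sub_self, pow_zero, one_smul] at this
    exact hh0 this.symm
  have hm1 : m ≠ 1 := by
    rintro rfl
    have hder2 : deriv (fun z => ψ z - ψ z₀) z₀ = h z₀ := by
      have heq : deriv (fun z => ψ z - ψ z₀) z₀ = deriv (fun z => (z - z₀) ^ 1 • h z) z₀ :=
        Filter.EventuallyEq.deriv_eq hhe
      rw [heq]
      have hda : HasDerivAt (fun z => (z - z₀) ^ 1 • h z) (h z₀) z₀ := by
        have := ((hasDerivAt_id z₀).sub_const z₀).mul hha.differentiableAt.hasDerivAt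
        simpa [Pi.mul_def] using this
      exact hda.deriv
    rw [deriv_sub_const, h0] at hder2
    exact hh0 hder2.symm
  have hm2 : 2 ≤ m := by omega
  have hmC : (m : ℂ) ≠ 0 := Nat.cast_ne_zero.mpr hm0
  set c := Complex.exp (Complex.log (h z₀) / m) with hcdef
  set r := fun z => c * Complex.exp (Complex.log (h z / h z₀) / m) with hrdef
  have hc : c ≠ 0 := Complex.exp_ne_zero _
  have hra : AnalyticAt ℂ r z₀ := by
    apply analyticAt_const.mul
    have h1 : AnalyticAt ℂ (fun z => h z / h z₀) z₀ := hha.div analyticAt_const hh0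
    have h1v : (fun z => h z / h z₀) z₀ ∈ Complex.slitPlane := by
      simp only [div_self hh0]
      exact Complex.one_mem_slitPlane
    have h2 : AnalyticAt ℂ (fun z => Complex.log (h z / h z₀)) z₀ := h1.clog h1v
    exact (h2.div analyticAt_const hmC).cexp
  have hr0 : r z₀ = c := by
    simp [hrdef, div_self hh0, Complex.log_one]
  have hrm : ∀ᶠ z in 𝓝 z₀, r z ^ m = h z := by
    filter_upwards [hha.continuousAt.eventually_ne hh0] with z hz
    have h1 : h z / h z₀ ≠ 0 := div_ne_zero hz hh0
    have e1 : c ^ m = h z₀ := by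
      rw [hcdef, ← Complex.exp_nat_mul, mul_div_cancel₀ _ hmC, Complex.exp_log hh0]
    have e2 : Complex.exp (Complex.log (h z / h z₀) / m) ^ m = h z / h z₀ := by
      rw [← Complex.exp_nat_mul, mul_div_cancel₀ _ hmC, Complex.exp_log h1]
    rw [hrdef]
    simp only
    rw [mul_pow, e1, e2, mul_comm, div_mul_cancel₀ _ hh0]
  set G := fun z => (z - z₀) * r z with hGdef
  have hGa : AnalyticAt ℂ G z₀ := ((analyticAt_id).sub analyticAt_const).mul hra
  have hGd : HasDerivAt G (r z₀) z₀ := by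
    have := ((hasDerivAt_id z₀).sub_const z₀).mul hra.differentiableAt.hasDerivAt
    simpa [Pi.mul_def] using this
  obtain ⟨p, hp⟩ := hGa
  have hGs : HasStrictDerivAt G (r z₀) z₀ := by
    have hs := hp.hasStrictDerivAt
    rwa [hs.hasDerivAt.unique hGd] at hs
  have hrz0 : r z₀ ≠ 0 := hr0 ▸ hc
  have hmap : Filter.map G (𝓝 z₀) = 𝓝 0 := by
    have := hGs.map_nhds_eq hrz0
    rwa [show G z₀ = 0 by simp [hGdef]] at this
  have hK : ∀ᶠ z in 𝓝 z₀, (ψ z = ψ z₀ + G z ^ m ∧ z ∈ 𝔻) := by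
    filter_upwards [hhe, hrm, hop.eventually_mem hz₀] with z h1 h2 h3
    refine ⟨?_, h3⟩
    have hGm : G z ^ m = (z - z₀) ^ m * h z := by
      rw [hGdef]; simp only; rw [mul_pow, h2]
    rw [hGm]
    rw [smul_eq_mul] at h1
    linear_combination h1
  have himg : G '' {z | ψ z = ψ z₀ + G z ^ m ∧ z ∈ 𝔻} ∈ 𝓝 (0 : ℂ) := by
    rw [← hmap]
    exact Filter.image_mem_map hK
  obtain ⟨ε, hε, hball⟩ := Metric.mem_nhds_iff.mp himg
  set ζ := Complex.exp (((2 * Real.pi / m : ℝ) : ℂ) * Complex.I) with hζdef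
  have hζm : ζ ^ m = 1 := by
    rw [hζdef, ← Complex.exp_nat_mul]
    have : (m : ℂ) * (((2 * Real.pi / m : ℝ) : ℂ) * Complex.I) = 2 * Real.pi * Complex.I := by
      push_cast
      field_simp
    rw [this, Complex.exp_two_pi_mul_I]
  have hζ1 : ζ ≠ 1 := by
    rw [hζdef, Ne, Complex.exp_eq_one_iff]
    push_neg
    intro n hn
    have hn2 : ((2 * Real.pi / m : ℝ) : ℂ) * Complex.I = ((n : ℂ) * (2 * Real.pi)) * Complex.I := by
      rw [hn]; ring
    have hn' := mul_right_cancel₀ Complex.I_ne_zero hn2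
    have hr' : (2 * Real.pi / m : ℝ) = (n : ℝ) * (2 * Real.pi) := by
      exact_mod_cast hn'
    have hπ : (0:ℝ) < 2 * Real.pi := by positivity
    have h1 : (1 : ℝ) = (n : ℝ) * m := by
      have hm' : (0:ℝ) < m := by exact_mod_cast Nat.pos_of_ne_zero hm0
      field_simp at hr'
      nlinarith [hr']
    have h2 : ((n * m : ℤ) : ℝ) = 1 := by push_cast; linarith
    have h3 : (n * m : ℤ) = 1 := by exact_mod_cast h2
    have h4 : (m : ℤ) ≤ 1 := Int.le_of_dvd one_pos ⟨n, by linarith [h3]⟩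
    omega
  set u : ℂ := ((ε/2 : ℝ) : ℂ) with hudef
  have hunorm : ‖u‖ = ε/2 := by
    rw [hudef, Complex.norm_real, Real.norm_eq_abs, abs_of_pos (by linarith)]
  have hu0 : u ≠ 0 := by
    rw [hudef]
    exact_mod_cast (by linarith : (ε/2 : ℝ) ≠ 0)
  have huball : u ∈ ball (0:ℂ) ε := by
    rw [mem_ball, dist_zero_right, hunorm]; linarith
  have hζnorm : ‖ζ‖ = 1 := by
    rw [hζdef, Complex.norm_exp_ofReal_mul_I]
  have huζ : u * ζ ∈ ball (0:ℂ) ε := by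
    rw [mem_ball, dist_zero_right, norm_mul, hunorm, hζnorm, mul_one]; linarith
  obtain ⟨z₁, hz₁, hGz₁⟩ := hball huball
  obtain ⟨z₂, hz₂, hGz₂⟩ := hball huζ
  have hne12 : z₁ ≠ z₂ := by
    intro hzz
    rw [hzz, hGz₂] at hGz₁
    exact hζ1 ((mul_right_inj' hu0).mp (by rw [mul_one]; exact hGz₁))
  refine hne12 (hi hz₁.2 hz₂.2 ?_)
  rw [hz₁.1, hz₂.1, hGz₁, hGz₂, mul_pow, hζm, mul_one]

theorem stmt3 (ψ f : ℂ → ℂ) (a : ℕ → ℂ) (hψ : MaMinda ψ)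
    (hψc : ContinuousOn ψ (Metric.closedBall 0 1))
    (hψi : Set.InjOn ψ (Metric.closedBall 0 1))
    (hf : IsClassA f) (ha0 : a 0 = 0) (ha1 : a 1 = 1)
    (hrep : ∀ z ∈ 𝔻, HasSum (fun k => a k * z ^ k) (f z))
    (hf0 : ∀ z ∈ 𝔻, z ≠ 0 → f z ≠ 0)
    (hcoef : ∀ t ∈ Set.Ico (0:ℝ) (2*Real.pi),
      Summable (fun k : ℕ =>
        ‖(((k+2 : ℕ) : ℂ) - ψ (Complex.exp (Complex.I*t))) /
          (1 - ψ (Complex.exp (Complex.I*t)))‖ * ‖a (k+2)‖) ∧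
      ∑' k : ℕ, ‖(((k+2 : ℕ) : ℂ) - ψ (Complex.exp (Complex.I*t))) /
          (1 - ψ (Complex.exp (Complex.I*t)))‖ * ‖a (k+2)‖ ≤ 1) :
    StarlikeMM ψ f := by
  have hop : IsOpen 𝔻 := isOpen_ball
  have h0mem : (0:ℂ) ∈ 𝔻 := by simp [𝔻]
  have hmem𝔻 : ∀ {z : ℂ}, z ∈ 𝔻 ↔ ‖z‖ < 1 := fun {z} => by
    simp [𝔻, mem_ball, dist_zero_right]
  -- boundedness of coefficients
  have hbdd : ∀ r : ℝ≥0, (r:ℝ) < 1 → ∃ C : ℝ, ∀ n, ‖a n‖ * (r:ℝ)^n ≤ C := by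
    intro r hr
    have hz : ((r:ℝ) : ℂ) ∈ 𝔻 := by
      rw [hmem𝔻, Complex.norm_real, Real.norm_eq_abs, _root_.abs_of_nonneg r.coe_nonneg]
      exact hr
    have hsum := (hrep _ hz).summable
    have h0 : Filter.Tendsto (fun n => ‖a n * ((r:ℝ):ℂ)^n‖) atTop (𝓝 0) := by
      simpa using hsum.tendsto_atTop_zero.norm
    obtain ⟨C, hC⟩ := h0.bddAbove_range
    refine ⟨C, fun n => ?_⟩
    have hCn : ‖a n * ((r:ℝ):ℂ)^n‖ ≤ C := hC ⟨n, rfl⟩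
    calc ‖a n‖ * (r:ℝ)^n = ‖a n * ((r:ℝ):ℂ)^n‖ := by
          rw [norm_mul, norm_pow, Complex.norm_real, Real.norm_eq_abs, _root_.abs_of_nonneg r.coe_nonneg]
      _ ≤ C := hCn
  -- radius criterion
  have hrad : ∀ b : ℕ → ℂ, (∀ r : ℝ≥0, (r:ℝ) < 1 → ∃ C : ℝ, ∀ n, ‖b n‖ * (r:ℝ)^n ≤ C) →
      1 ≤ (FormalMultilinearSeries.ofScalars ℂ b).radius := by
    intro b hb
    apply ENNReal.le_of_forall_nnreal_lt
    intro r hr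
    have hr1 : (r:ℝ) < 1 := by exact_mod_cast hr
    obtain ⟨C, hC⟩ := hb r hr1
    apply FormalMultilinearSeries.le_radius_of_bound _ C
    intro n
    rw [FormalMultilinearSeries.ofScalars_norm]
    exact hC n
  -- power series for f
  have hp : HasFPowerSeriesOnBall f (FormalMultilinearSeries.ofScalars ℂ a) 0 1 := by
    refine ⟨hrad a hbdd, one_pos, ?_⟩
    intro y hy
    rw [zero_add]
    have hy' : y ∈ 𝔻 := by
      rw [mem_emetric_ball_zero_iff, enorm_eq_nnnorm] at hy
      rw [hmem𝔻]
      exact_mod_cast hy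
    have hfun : (fun n => FormalMultilinearSeries.ofScalars ℂ a n fun _ => y)
        = fun n : ℕ => a n * y ^ n := by
      funext n
      rw [FormalMultilinearSeries.ofScalars_apply_eq, smul_eq_mul]
    rw [hfun]
    exact hrep y hy'
  -- the function g with f z = z * g z
  set p1 := FormalMultilinearSeries.ofScalars ℂ (fun k => a (k+1)) with hp1def
  have hbdd1 : ∀ r : ℝ≥0, (r:ℝ) < 1 → ∃ C : ℝ, ∀ n, ‖a (n+1)‖ * (r:ℝ)^n ≤ C := by
    intro r hr
    obtain ⟨C, hC⟩ := hbdd r hr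
    rcases eq_or_lt_of_le r.coe_nonneg with h0 | h0
    · refine ⟨max ‖a 1‖ 0, fun n => ?_⟩
      cases n with
      | zero => simpa using le_max_left ‖a 1‖ 0
      | succ k =>
        rw [show (r:ℝ) = 0 from h0.symm, zero_pow (by omega : k + 1 ≠ 0), mul_zero]
        exact le_max_right _ _
    · refine ⟨C / r, fun n => ?_⟩
      rw [le_div_iff₀ h0]
      calc ‖a (n+1)‖ * (r:ℝ)^n * r = ‖a (n+1)‖ * (r:ℝ)^(n+1) := by rw [pow_succ]; ring
        _ ≤ C := hC (n+1)
  have hrad1 : 1 ≤ p1.radius := hrad _ hbdd1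
  set g := p1.sum with hgdef
  have hg : HasFPowerSeriesOnBall g p1 0 1 :=
    (p1.hasFPowerSeriesOnBall (lt_of_lt_of_le one_pos hrad1)).mono one_pos hrad1
  have hmemE : ∀ {z : ℂ}, z ∈ 𝔻 → z ∈ Metric.eball (0:ℂ) 1 := by
    intro z hz
    rw [mem_emetric_ball_zero_iff, enorm_eq_nnnorm]
    rw [hmem𝔻] at hz
    exact_mod_cast hz
  have hgsum : ∀ z ∈ 𝔻, HasSum (fun n => a (n+1) * z ^ n) (g z) := by
    intro z hz
    have := hg.hasSum (hmemE hz)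
    rw [zero_add] at this
    have hfun : (fun n => p1 n fun _ => z) = fun n : ℕ => a (n+1) * z ^ n := by
      funext n
      rw [hp1def, FormalMultilinearSeries.ofScalars_apply_eq, smul_eq_mul]
    rwa [hfun] at this
  have hgd : DifferentiableOn ℂ g 𝔻 := fun z hz =>
    (hg.analyticAt_of_mem (hmemE hz)).differentiableAt.differentiableWithinAt
  have hfg : ∀ z ∈ 𝔻, f z = z * g z := by
    intro z hz
    have h1 : HasSum (fun n => a (n+1) * z ^ (n+1))
        (f z - ∑ i ∈ Finset.range 1, a i * z ^ i) :=
      (hasSum_nat_add_iff' 1).mpr (hrep z hz)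
    rw [Finset.range_one, Finset.sum_singleton, ha0, zero_mul, sub_zero] at h1
    have h2 : HasSum (fun n => z * (a (n+1) * z ^ n)) (z * g z) := (hgsum z hz).mul_left z
    have hfun : (fun n : ℕ => z * (a (n+1) * z ^ n)) = fun n : ℕ => a (n+1) * z ^ (n+1) := by
      funext n; rw [pow_succ]; ring
    rw [hfun] at h2
    exact h1.unique h2
  have hg1 : g 0 = 1 := by
    have h1 := hgsum 0 h0mem
    have h2 : HasSum (fun n : ℕ => a (n+1) * (0:ℂ) ^ n) (a 1 * (0:ℂ) ^ 0) :=
      hasSum_single 0 (fun b hb => by rw [zero_pow hb, mul_zero])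
    have := h1.unique h2
    rw [this, pow_zero, mul_one, ha1]
  have hg0 : ∀ z ∈ 𝔻, g z ≠ 0 := by
    intro z hz
    rcases eq_or_ne z 0 with rfl | hz0
    · rw [hg1]; exact one_ne_zero
    · intro hzero
      exact hf0 z hz hz0 (by rw [hfg z hz, hzero, mul_zero])
  -- termwise differentiation
  have hins : insert (0:ℂ) Set.univ = Set.univ := by simp
  have hds : ∀ z ∈ 𝔻, HasSum (fun n : ℕ => ((n:ℂ)+1) * a (n+1) * z ^ (n+1)) (z * deriv f z) := by
    intro z hz
    have hz1 : (‖z‖₊ : ℝ≥0∞) < 1 := by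
      rw [hmem𝔻] at hz
      exact_mod_cast hz
    have hfd : HasFDerivWithinAt f (fderiv ℂ f z) (insert (0:ℂ) Set.univ) ((0:ℂ) + z) := by
      rw [hins, zero_add]
      exact ((hf.1.analyticAt (hop.mem_nhds hz)).differentiableAt.hasFDerivAt).hasFDerivWithinAt
    have hu : UniqueDiffOn ℂ (insert (0:ℂ) Set.univ) := by rw [hins]; exact uniqueDiffOn_univ
    have H := hp.hasFPowerSeriesWithinOnBall.hasSum_derivSeries_of_hasFDerivWithinAt
      hz1 (by simp) hfd hu
    have H2 := (ContinuousLinearMap.apply ℂ ℂ z).hasSum H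
    simp only [ContinuousLinearMap.apply_apply, FormalMultilinearSeries.derivSeries_apply_diag,
      FormalMultilinearSeries.ofScalars_apply_eq, nsmul_eq_mul, smul_eq_mul, Nat.cast_add,
      Nat.cast_one] at H2
    have hval : (fderiv ℂ f z) z = z * deriv f z := by
      have h1 : (fderiv ℂ f z) z = z • (fderiv ℂ f z) 1 := by
        rw [← (fderiv ℂ f z).map_smul, smul_eq_mul, mul_one]
      rw [h1, fderiv_apply_one_eq_deriv, smul_eq_mul]
    rw [hval] at H2
    have hfe : (fun n : ℕ => ((n:ℂ)+1) * a (n+1) * z ^ (n+1))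
        = fun n : ℕ => ((n:ℂ)+1) * (a (n+1) * z ^ (n+1)) := by
      funext n; ring
    rw [hfe]
    exact H2
  -- the analytic extension of z f'/f
  set q := fun z => deriv f z / g z with hqdef
  have hfa : AnalyticOnNhd ℂ f 𝔻 := hf.1.analyticOnNhd hop
  have hdfd : DifferentiableOn ℂ (deriv f) 𝔻 := hfa.deriv.differentiableOn
  have hqd : DifferentiableOn ℂ q 𝔻 := hdfd.div hgd hg0
  have hq0 : q 0 = 1 := by
    rw [hqdef]
    simp only
    rw [hf.2.2, hg1, div_one]
  -- key coefficient bound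
  have hkey : ∀ w : ℂ, w ≠ 1 →
      Summable (fun k : ℕ => ‖(((k+2:ℕ):ℂ) - w)‖ * ‖a (k+2)‖) →
      (∑' k : ℕ, ‖(((k+2:ℕ):ℂ) - w)‖ * ‖a (k+2)‖) ≤ ‖1 - w‖ →
      ∀ z ∈ 𝔻, q z ≠ w := by
    intro w hw hS hT z hz
    rcases eq_or_ne z 0 with rfl | hz0
    · rw [hq0]; exact fun h => hw h.symm
    intro hqw
    have hgz := hg0 z hz
    have hEq : deriv f z = w * g z := by
      rw [hqdef] at hqw
      simp only at hqw
      rw [div_eq_iff hgz] at hqw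
      exact hqw
    have hz1 : ‖z‖ < 1 := hmem𝔻.mp hz
    have h3 := (hds z hz).mul_left z⁻¹
    have hfun3 : (fun n : ℕ => z⁻¹ * (((n:ℂ)+1) * a (n+1) * z ^ (n+1)))
        = fun n : ℕ => ((n:ℂ)+1) * a (n+1) * z ^ n := by
      funext n
      rw [pow_succ]
      field_simp
    rw [hfun3, inv_mul_cancel_left₀ hz0] at h3
    have h4 := h3.sub ((hgsum z hz).mul_left w)
    have hfun4 : (fun n : ℕ => ((n:ℂ)+1) * a (n+1) * z ^ n - w * (a (n+1) * z ^ n))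
        = fun n : ℕ => (((n:ℂ)+1) - w) * a (n+1) * z ^ n := by
      funext n; ring
    rw [hfun4, hEq, sub_self] at h4
    have h5 := (hasSum_nat_add_iff' 1).mpr h4
    rw [Finset.range_one, Finset.sum_singleton] at h5
    simp only [Nat.cast_zero, zero_add, pow_zero, mul_one, ha1, zero_sub] at h5
    -- h5 : HasSum (fun n => ((n+1 : ℂ)+1 - w) * a (n+1+1) * z^(n+1)) (-(1 - w))
    set T : ℕ → ℂ := fun n => ((((n+2:ℕ)):ℂ) - w) * a (n+2) * z ^ (n+1) with hTdef
    have hTsum : HasSum T (-(1 - w)) := by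
      have hfunT : (fun n : ℕ => ((((n+1:ℕ)):ℂ)+1 - w) * a (n+1+1) * z ^ (n+1)) = T := by
        funext n
        rw [hTdef]
        simp only
        push_cast
        ring
      rwa [hfunT] at h5
    have h1w : (1:ℂ) - w ≠ 0 := sub_ne_zero.mpr (fun h => hw h.symm)
    have hnormle : ∀ n : ℕ, ‖T n‖ ≤ (‖(((n+2:ℕ):ℂ) - w)‖ * ‖a (n+2)‖) * ‖z‖ := by
      intro n
      rw [hTdef]
      simp only
      rw [norm_mul, norm_mul, norm_pow]
      have hle : ‖z‖ ^ (n+1) ≤ ‖z‖ := by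
        calc ‖z‖ ^ (n+1) ≤ ‖z‖ ^ 1 :=
              pow_le_pow_of_le_one (norm_nonneg z) hz1.le (by omega)
          _ = ‖z‖ := pow_one _
      calc ‖(((n+2:ℕ):ℂ) - w)‖ * ‖a (n+2)‖ * ‖z‖ ^ (n+1)
          ≤ ‖(((n+2:ℕ):ℂ) - w)‖ * ‖a (n+2)‖ * ‖z‖ := by
            apply mul_le_mul_of_nonneg_left hle
            positivity
        _ = (‖(((n+2:ℕ):ℂ) - w)‖ * ‖a (n+2)‖) * ‖z‖ := by ring
    have hsumnorm : Summable (fun n => ‖T n‖) :=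
      Summable.of_nonneg_of_le (fun n => norm_nonneg _) hnormle (hS.mul_right ‖z‖)
    have hle : ‖(1:ℂ) - w‖ ≤ ∑' n, ‖T n‖ := by
      have h6 := norm_tsum_le_tsum_norm hsumnorm
      rw [hTsum.tsum_eq, norm_neg] at h6
      exact h6
    have hlt : ∑' n, ‖T n‖ < ‖(1:ℂ) - w‖ := by
      have h6 : ∑' n, ‖T n‖ ≤ (∑' n, ‖(((n+2:ℕ):ℂ) - w)‖ * ‖a (n+2)‖) * ‖z‖ := by
        rw [← tsum_mul_right]
        exact hsumnorm.tsum_le_tsum hnormle (hS.mul_right ‖z‖)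
      have h7 : (∑' n, ‖(((n+2:ℕ):ℂ) - w)‖ * ‖a (n+2)‖) * ‖z‖ ≤ ‖(1:ℂ) - w‖ * ‖z‖ :=
        mul_le_mul_of_nonneg_right hT (norm_nonneg z)
      have h8 : ‖(1:ℂ) - w‖ * ‖z‖ < ‖(1:ℂ) - w‖ := by
        calc ‖(1:ℂ) - w‖ * ‖z‖ < ‖(1:ℂ) - w‖ * 1 :=
              mul_lt_mul_of_pos_left hz1 (norm_pos_iff.mpr h1w)
          _ = ‖(1:ℂ) - w‖ := mul_one _
      linarith
    linarith
  -- the boundary values are avoided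
  have hψ0 : ψ 0 = 1 := hψ.2.2.2.1
  have h0cb : (0:ℂ) ∈ Metric.closedBall (0:ℂ) 1 := by simp
  have hqne : ∀ z ∈ 𝔻, ∀ u : ℂ, ‖u‖ = 1 → q z ≠ ψ u := by
    intro z hz u hu
    have hucb : u ∈ Metric.closedBall (0:ℂ) 1 := by
      simp [mem_closedBall, dist_zero_right, hu]
    have hu0 : u ≠ 0 := by
      intro h; rw [h] at hu; simp at hu
    have hne1 : ψ u ≠ 1 := by
      intro h
      exact hu0 (hψi hucb h0cb (by rw [h, hψ0]))
    obtain ⟨t, ht, hut⟩ : ∃ t ∈ Set.Ico (0:ℝ) (2*Real.pi),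
        Complex.exp (Complex.I * t) = u := by
      have habs : ‖u‖ = 1 := hu
      have hexp : Complex.exp (Complex.I * u.arg) = u := by
        have := Complex.norm_mul_exp_arg_mul_I u
        rw [habs, Complex.ofReal_one, one_mul, mul_comm] at this
        exact this
      rcases le_or_gt 0 u.arg with h | h
      · exact ⟨u.arg, ⟨h, by linarith [Complex.arg_le_pi u, Real.pi_pos]⟩, hexp⟩
      · refine ⟨u.arg + 2*Real.pi,
          ⟨by linarith [Complex.neg_pi_lt_arg u, Real.pi_pos],
           by linarith [Complex.arg_le_pi u]⟩, ?_⟩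
        have h2 : Complex.I * ((u.arg + 2*Real.pi : ℝ) : ℂ)
            = Complex.I * u.arg + 2*Real.pi*Complex.I := by
          push_cast; ring
        rw [h2, Complex.exp_add, Complex.exp_two_pi_mul_I, mul_one, hexp]
    obtain ⟨hSdiv, hTdiv⟩ := hcoef t ht
    rw [hut] at hSdiv hTdiv
    have h1w : (1:ℂ) - ψ u ≠ 0 := sub_ne_zero.mpr (fun h => hne1 h.symm)
    have hc0 : ‖(1:ℂ) - ψ u‖ ≠ 0 := norm_ne_zero_iff.mpr h1w
    have hfun : (fun k : ℕ => ‖(((k+2:ℕ):ℂ) - ψ u) / (1 - ψ u)‖ * ‖a (k+2)‖)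
        = fun k => (‖(((k+2:ℕ):ℂ) - ψ u)‖ * ‖a (k+2)‖) / ‖(1:ℂ) - ψ u‖ := by
      funext k
      rw [norm_div]
      ring
    rw [hfun] at hSdiv hTdiv
    have hfun2 : (fun k : ℕ => ((‖(((k+2:ℕ):ℂ) - ψ u)‖ * ‖a (k+2)‖) / ‖(1:ℂ) - ψ u‖)
          * ‖(1:ℂ) - ψ u‖)
        = fun k => ‖(((k+2:ℕ):ℂ) - ψ u)‖ * ‖a (k+2)‖ := by
      funext k
      rw [div_mul_cancel₀ _ hc0]
    have hS : Summable (fun k : ℕ => ‖(((k+2:ℕ):ℂ) - ψ u)‖ * ‖a (k+2)‖) := by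
      have := hSdiv.mul_right ‖(1:ℂ) - ψ u‖
      rwa [hfun2] at this
    have hT : (∑' k : ℕ, ‖(((k+2:ℕ):ℂ) - ψ u)‖ * ‖a (k+2)‖) ≤ ‖(1:ℂ) - ψ u‖ := by
      have e : (∑' k : ℕ, ‖(((k+2:ℕ):ℂ) - ψ u)‖ * ‖a (k+2)‖)
          = (∑' k : ℕ, (‖(((k+2:ℕ):ℂ) - ψ u)‖ * ‖a (k+2)‖) / ‖(1:ℂ) - ψ u‖)
            * ‖(1:ℂ) - ψ u‖ := by
        rw [← tsum_mul_right]
        exact tsum_congr fun k => (div_mul_cancel₀ _ hc0).symm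
      rw [e]
      calc (∑' k : ℕ, (‖(((k+2:ℕ):ℂ) - ψ u)‖ * ‖a (k+2)‖) / ‖(1:ℂ) - ψ u‖)
            * ‖(1:ℂ) - ψ u‖ ≤ 1 * ‖(1:ℂ) - ψ u‖ :=
          mul_le_mul_of_nonneg_right hTdiv (norm_nonneg _)
        _ = ‖(1:ℂ) - ψ u‖ := one_mul _
    exact hkey (ψ u) hne1 hS hT z hz
  -- ψ has nonvanishing derivative on 𝔻 and strict derivatives
  have hψinj : Set.InjOn ψ 𝔻 := hψ.2.1
  have hder : ∀ x ∈ 𝔻, deriv ψ x ≠ 0 := fun x hx =>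
    deriv_ne_zero_of_injOn_s3 hψ.1 hψinj hx
  have hψs : ∀ x ∈ 𝔻, HasStrictDerivAt ψ (deriv ψ x) x := by
    intro x hx
    obtain ⟨p, hpψ⟩ := hψ.1.analyticAt (hop.mem_nhds hx)
    have hs := hpψ.hasStrictDerivAt
    have heq : deriv ψ x = p.coeff 1 := hs.hasDerivAt.deriv
    rw [heq]
    exact hs
  -- ψ '' 𝔻 is open
  have hSopen : IsOpen (ψ '' 𝔻) := by
    rw [isOpen_iff_mem_nhds]
    rintro y ⟨x, hx, rfl⟩
    rw [← (hψs x hx).map_nhds_eq (hder x hx)]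
    exact Filter.image_mem_map (hop.mem_nhds hx)
  -- closure of ψ '' 𝔻 is inside ψ '' closedBall
  have hcpt : IsCompact (ψ '' Metric.closedBall 0 1) :=
    (isCompact_closedBall (0:ℂ) 1).image_of_continuousOn hψc
  have hclos : closure (ψ '' 𝔻) ⊆ ψ '' Metric.closedBall 0 1 :=
    closure_minimal (Set.image_mono (f := ψ) ball_subset_closedBall) hcpt.isClosed
  -- q maps 𝔻 into ψ '' 𝔻
  have hqcont : ContinuousOn q 𝔻 := hqd.continuousOn
  have hqmem : ∀ z ∈ 𝔻, q z ∈ ψ '' 𝔻 := by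
    have hpre : IsPreconnected (q '' 𝔻) :=
      ((convex_ball (0:ℂ) 1).isPreconnected).image q hqcont
    have hsub : q '' 𝔻 ⊆ ψ '' 𝔻 ∪ (closure (ψ '' 𝔻))ᶜ := by
      rintro y ⟨z, hz, rfl⟩
      rcases em (q z ∈ ψ '' 𝔻) with h | h
      · exact Or.inl h
      refine Or.inr fun hcl => ?_
      obtain ⟨x, hx, hxe⟩ := hclos hcl
      have hxlt : ‖x‖ ≤ 1 := mem_closedBall_zero_iff.mp hx
      rcases eq_or_lt_of_le hxlt with heq | hlt
      · exact hqne z hz x heq hxe.symm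
      · exact h ⟨x, hmem𝔻.mpr hlt, hxe⟩
    have hinter : (q '' 𝔻 ∩ ψ '' 𝔻).Nonempty :=
      ⟨q 0, ⟨0, h0mem, rfl⟩, by rw [hq0, ← hψ0]; exact ⟨0, h0mem, rfl⟩⟩
    have himg : q '' 𝔻 ⊆ ψ '' 𝔻 :=
      IsPreconnected.subset_left_of_subset_union hSopen isClosed_closure.isOpen_compl
        (disjoint_compl_right.mono_right (compl_subset_compl.mpr subset_closure))
        hsub hinter hpre
    exact fun z hz => himg ⟨z, hz, rfl⟩
  -- define ω
  set ω := fun z => Function.invFunOn ψ 𝔻 (q z) with hωdef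
  have hωspec : ∀ z ∈ 𝔻, ω z ∈ 𝔻 ∧ ψ (ω z) = q z := by
    intro z hz
    obtain ⟨x, hx, hxe⟩ := hqmem z hz
    have hex : ∃ x ∈ 𝔻, ψ x = q z := ⟨x, hx, hxe⟩
    exact ⟨Function.invFunOn_mem hex, Function.invFunOn_eq hex⟩
  have hω0 : ω 0 = 0 := by
    have h := hωspec 0 h0mem
    apply hψinj h.1 h0mem
    rw [h.2, hq0, hψ0]
  -- differentiability of ω
  have hωd : DifferentiableOn ℂ ω 𝔻 := by
    intro z₀ hz₀
    obtain ⟨hx₀mem, hx₀eq⟩ := hωspec z₀ hz₀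
    set x₀ := ω z₀ with hx₀def
    have hs := hψs x₀ hx₀mem
    have hne := hder x₀ hx₀mem
    have hsf := hs.hasStrictFDerivAt_equiv hne
    set e := hsf.toOpenPartialHomeomorph ψ with hedef
    have hee : ⇑e = ψ := hsf.toOpenPartialHomeomorph_coe
    have hx₀src : x₀ ∈ e.source := hsf.mem_toOpenPartialHomeomorph_source
    have htgt : ψ x₀ ∈ e.target := by
      have := e.map_source hx₀src
      rwa [hee] at this
    have hqda : DifferentiableAt ℂ q z₀ := hqd.differentiableAt (hop.mem_nhds hz₀)
    have hqc : ContinuousAt q z₀ := hqda.continuousAt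
    have hq₀ : q z₀ = ψ x₀ := hx₀eq.symm
    have hev1 : ∀ᶠ z in 𝓝 z₀, z ∈ 𝔻 := hop.eventually_mem hz₀
    have hev2 : ∀ᶠ z in 𝓝 z₀, q z ∈ e.target := by
      have h2 : Filter.Tendsto q (𝓝 z₀) (𝓝 (ψ x₀)) := by rw [← hq₀]; exact hqc
      exact h2.eventually (e.open_target.eventually_mem htgt)
    have hsx : e.symm (ψ x₀) = x₀ := by
      have := e.left_inv hx₀src
      rwa [hee] at this
    have htends : Filter.Tendsto (fun z => e.symm (q z)) (𝓝 z₀) (𝓝 x₀) := by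
      have h2 : Filter.Tendsto q (𝓝 z₀) (𝓝 (ψ x₀)) := by rw [← hq₀]; exact hqc
      have h3 := (e.continuousAt_symm htgt).tendsto.comp h2
      rwa [hsx] at h3
    have hev3 : ∀ᶠ z in 𝓝 z₀, e.symm (q z) ∈ 𝔻 :=
      htends.eventually (hop.eventually_mem hx₀mem)
    have heveq : ∀ᶠ z in 𝓝 z₀, ω z = e.symm (q z) := by
      filter_upwards [hev1, hev2, hev3] with z h1 h2 h3
      obtain ⟨hm, he⟩ := hωspec z h1
      apply hψinj hm h3
      rw [he]
      have h4 := e.right_inv h2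
      rw [hee] at h4
      exact h4.symm
    have hcomp : DifferentiableAt ℂ (fun z => e.symm (q z)) z₀ := by
      have h1 : DifferentiableAt ℂ e.symm (q z₀) := by
        rw [hq₀]
        have h2 := hsf.to_localInverse.differentiableAt
        rwa [hsf.localInverse_def] at h2
      exact h1.comp z₀ hqda
    exact (hcomp.congr_of_eventuallyEq heveq).differentiableWithinAt
  -- assemble
  refine ⟨hf, hf0, ω, hωd, hω0, fun z hz => (hωspec z hz).1, ?_⟩
  intro z hz
  rcases eq_or_ne z 0 with rfl | hz0
  · show (if (0:ℂ) = 0 then (1:ℂ) else 0 * deriv f 0 / f 0) = ψ (ω 0)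
    rw [if_pos rfl, (hωspec 0 h0mem).2, hq0]
  · show (if z = 0 then (1:ℂ) else z * deriv f z / f z) = ψ (ω z)
    rw [if_neg hz0, (hωspec z hz).2]
    show z * deriv f z / f z = deriv f z / g z
    rw [hfg z hz, mul_div_mul_left _ _ hz0]
end
end

section
/- Let −1 ≤ E < D ≤ 1. If f(z) = z + Σ_{k≥2} a_k z^k ∈ 𝒜 satisfies Σ_{k=2}^∞ ((k − 1) + |kE − D|) |a_k| ≤ D − E, then f(z) ≠ 0 for z ∈ 𝔻\{0} and f ∈ S*((1 + Dz)/(1 + Ez)), i.e. f is Janowski starlike. -/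
open Complex Metric Set

noncomputable section

-- auxiliary lemma: term-by-term differentiation
lemma aux_hasDerivAt (a : ℕ → ℂ) (f : ℂ → ℂ)
    (hS : Summable fun n : ℕ => (n : ℝ) * ‖a n‖)
    (hrep : ∀ z ∈ Metric.ball (0:ℂ) 1, HasSum (fun k => a k * z ^ k) (f z))
    {z : ℂ} (hz : z ∈ Metric.ball (0:ℂ) 1) :
    HasDerivAt f (∑' k : ℕ, (k : ℂ) * a k * z ^ (k - 1)) z := by
  have hg : ∀ n : ℕ, ∀ y ∈ Metric.ball (0:ℂ) 1,
      HasDerivAt (fun w => a n * w ^ n) ((n : ℂ) * a n * y ^ (n - 1)) y := by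
    intro n y _
    have := (hasDerivAt_pow n y).const_mul (a n)
    exact this.congr_deriv (by ring)
  have hg' : ∀ n : ℕ, ∀ y ∈ Metric.ball (0:ℂ) 1,
      ‖(n : ℂ) * a n * y ^ (n - 1)‖ ≤ (n : ℝ) * ‖a n‖ := by
    intro n y hy
    have hy1 : ‖y‖ ≤ 1 := le_of_lt (by simpa using mem_ball_zero_iff.mp hy)
    calc ‖(n : ℂ) * a n * y ^ (n - 1)‖ = (n : ℝ) * ‖a n‖ * ‖y‖ ^ (n - 1) := by
          simp [norm_mul, norm_pow]
      _ ≤ (n : ℝ) * ‖a n‖ * 1 := by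
          apply mul_le_mul_of_nonneg_left (pow_le_one₀ (norm_nonneg _) hy1)
          positivity
      _ = (n : ℝ) * ‖a n‖ := by ring
  have key := hasDerivAt_tsum_of_isPreconnected hS isOpen_ball
    (convex_ball (0:ℂ) 1).isPreconnected hg hg' hz (hrep z hz).summable hz
  apply key.congr_of_eventuallyEq
  filter_upwards [isOpen_ball.mem_nhds hz] with w hw
  exact (hrep w hw).tsum_eq.symm

-- helper: norm bound for shifted series
lemma aux_norm_bound (c : ℕ → ℝ) (g : ℕ → ℂ) (v z : ℂ)
    (hg : HasSum g v) (hc : Summable c) (hc0 : ∀ k, 0 ≤ c k)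
    (hz : ‖z‖ ≤ 1)
    (hgn : ∀ k, ‖g k‖ = c k * ‖z‖^(k+2)) :
    ‖v‖ ≤ ‖z‖^2 * ∑' k, c k := by
  have hb : ∀ k, ‖g k‖ ≤ ‖z‖^2 * c k := by
    intro k; rw [hgn k]
    have h1 : ‖z‖^(k+2) ≤ ‖z‖^2 := by
      calc ‖z‖^(k+2) = ‖z‖^2 * ‖z‖^k := by ring
        _ ≤ ‖z‖^2 * 1 := by
            exact mul_le_mul_of_nonneg_left (pow_le_one₀ (norm_nonneg z) hz) (by positivity)
        _ = ‖z‖^2 := mul_one _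
    calc c k * ‖z‖^(k+2) ≤ c k * ‖z‖^2 := mul_le_mul_of_nonneg_left h1 (hc0 k)
      _ = ‖z‖^2 * c k := mul_comm _ _
  have hsummable : Summable (fun k => ‖g k‖) :=
    (hc.mul_left (‖z‖^2)).of_nonneg_of_le (fun k => norm_nonneg _) hb
  calc ‖v‖ = ‖∑' k, g k‖ := by rw [hg.tsum_eq]
    _ ≤ ∑' k, ‖g k‖ := norm_tsum_le_tsum_norm hsummable
    _ ≤ ∑' k, ‖z‖^2 * c k := Summable.tsum_le_tsum hb hsummable (hc.mul_left _)
    _ = ‖z‖^2 * ∑' k, c k := tsum_mul_left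

theorem stmt4 (D E : ℝ) (hE : -1 ≤ E) (hED : E < D) (hD : D ≤ 1)
    (f : ℂ → ℂ) (a : ℕ → ℂ)
    (hf : IsClassA f) (ha0 : a 0 = 0) (ha1 : a 1 = 1)
    (hrep : ∀ z ∈ 𝔻, HasSum (fun k => a k * z ^ k) (f z))
    (hsum : Summable (fun k : ℕ =>
      ((((k+2:ℕ):ℝ) - 1) + |((k+2:ℕ):ℝ)*E - D|) * ‖a (k+2)‖))
    (hcoef : ∑' k : ℕ,
      ((((k+2:ℕ):ℝ) - 1) + |((k+2:ℕ):ℝ)*E - D|) * ‖a (k+2)‖ ≤ D - E) :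
    StarlikeMM (fun z => (1 + (D:ℂ)*z) / (1 + (E:ℂ)*z)) f := by
  have hDE : (0:ℝ) < D - E := sub_pos.mpr hED
  have hE1 : E ≤ 1 := le_of_lt (lt_of_lt_of_le hED hD)
  -- weights
  set u : ℕ → ℝ := fun k => ‖a (k+2)‖ with hu_def
  set wgt : ℕ → ℝ := fun k => ((k:ℝ)+1) + |((k:ℝ)+2)*E - D| with hwgt_def
  have hwgt_eq : ∀ k : ℕ, ((((k+2:ℕ):ℝ) - 1) + |((k+2:ℕ):ℝ)*E - D|) = wgt k := by
    intro k; simp only [hwgt_def]; push_cast; ring_nf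
  have hsum' : Summable (fun k => wgt k * u k) := by
    refine hsum.congr fun k => ?_
    rw [hwgt_eq k]
  have hcoef' : ∑' k, wgt k * u k ≤ D - E := by
    refine le_trans (le_of_eq ?_) hcoef
    exact tsum_congr fun k => by rw [hwgt_eq k]
  have hu_nonneg : ∀ k : ℕ, 0 ≤ u k := fun k => norm_nonneg _
  have hwgt1 : ∀ k : ℕ, (1:ℝ) ≤ wgt k := by
    intro k; simp only [hwgt_def]
    have : (0:ℝ) ≤ |((k:ℝ)+2)*E - D| := abs_nonneg _
    have : (0:ℝ) ≤ (k:ℝ) := Nat.cast_nonneg k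
    nlinarith [abs_nonneg (((k:ℝ)+2)*E - D)]
  have hwgtk1 : ∀ k : ℕ, (k:ℝ)+1 ≤ wgt k := by
    intro k; simp only [hwgt_def]; nlinarith [abs_nonneg (((k:ℝ)+2)*E - D)]
  have hwgtabs : ∀ k : ℕ, |((k:ℝ)+2)*E - D| ≤ wgt k := by
    intro k; simp only [hwgt_def]; nlinarith [Nat.cast_nonneg (α := ℝ) k]
  have hwgtDE : ∀ k : ℕ, D - E ≤ wgt k := by
    intro k; simp only [hwgt_def]
    have h1 : D - ((k:ℝ)+2)*E ≤ |((k:ℝ)+2)*E - D| := by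
      rw [abs_sub_comm]; exact le_abs_self _
    nlinarith [Nat.cast_nonneg (α := ℝ) k]
  -- summabilities
  have hsum_u : Summable u :=
    hsum'.of_nonneg_of_le hu_nonneg (fun k => le_mul_of_one_le_left (hu_nonneg k) (hwgt1 k))
  have hsum_T1 : Summable (fun k : ℕ => ((k:ℝ)+1) * u k) :=
    hsum'.of_nonneg_of_le (fun k => by positivity)
      (fun k => mul_le_mul_of_nonneg_right (hwgtk1 k) (hu_nonneg k))
  have hsum_T2 : Summable (fun k : ℕ => |((k:ℝ)+2)*E - D| * u k) :=
    hsum'.of_nonneg_of_le (fun k => by positivity)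
      (fun k => mul_le_mul_of_nonneg_right (hwgtabs k) (hu_nonneg k))
  have hsum_n : Summable (fun n : ℕ => (n:ℝ) * ‖a n‖) := by
    rw [← summable_nat_add_iff 2]
    refine (hsum'.mul_left 2).of_nonneg_of_le (fun k => by positivity) (fun k => ?_)
    have : ((k+2:ℕ):ℝ) = (k:ℝ)+2 := by push_cast; ring
    rw [this]
    have : ((k:ℝ)+2) ≤ 2 * wgt k := by nlinarith [hwgtk1 k]
    calc ((k:ℝ)+2) * ‖a (k+2)‖ ≤ (2 * wgt k) * u k :=
          mul_le_mul_of_nonneg_right this (hu_nonneg k)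
      _ = 2 * (wgt k * u k) := by ring
  set S := ∑' k, u k with hS_def
  set T1 := ∑' k : ℕ, ((k:ℝ)+1) * u k with hT1_def
  set T2 := ∑' k : ℕ, |((k:ℝ)+2)*E - D| * u k with hT2_def
  have hT1_nonneg : 0 ≤ T1 := tsum_nonneg fun k => by positivity
  have hT2_nonneg : 0 ≤ T2 := tsum_nonneg fun k => by positivity
  have hT : T1 + T2 ≤ D - E := by
    rw [hT1_def, hT2_def, ← Summable.tsum_add hsum_T1 hsum_T2]
    calc ∑' k : ℕ, (((k:ℝ)+1) * u k + |((k:ℝ)+2)*E - D| * u k)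
        = ∑' k : ℕ, wgt k * u k := tsum_congr fun k => by simp only [hwgt_def]; ring
      _ ≤ D - E := hcoef'
  have hS1 : S ≤ 1 := by
    have h1 : (D - E) * S ≤ D - E := by
      rw [hS_def, ← tsum_mul_left]
      refine le_trans (Summable.tsum_le_tsum (fun k => ?_) (hsum_u.mul_left _) hsum') hcoef'
      exact mul_le_mul_of_nonneg_right (hwgtDE k) (hu_nonneg k)
    nlinarith
  -- function-level analytic facts
  have h01 : (0:ℂ) ∈ 𝔻 := by simp [𝔻]
  have hopen : IsOpen 𝔻 := isOpen_ball
  have hfa : AnalyticOnNhd ℂ f 𝔻 := hf.1.analyticOnNhd hopen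
  have hf'a : AnalyticOnNhd ℂ (deriv f) 𝔻 := hfa.deriv
  set A : ℂ → ℂ := fun z => z * deriv f z - f z with hA_def
  set B : ℂ → ℂ := fun z => (D:ℂ) * f z - (E:ℂ) * (z * deriv f z) with hB_def
  have hA_an : AnalyticOnNhd ℂ A 𝔻 := (analyticOnNhd_id.mul hf'a).sub hfa
  have hB_an : AnalyticOnNhd ℂ B 𝔻 :=
    (analyticOnNhd_const.mul hfa).sub (analyticOnNhd_const.mul (analyticOnNhd_id.mul hf'a))
  -- series representations
  have hder : ∀ z ∈ 𝔻, HasDerivAt f (∑' k : ℕ, (k:ℂ) * a k * z^(k-1)) z :=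
    fun z hz => aux_hasDerivAt a f hsum_n hrep hz
  have hsummable_d : ∀ z ∈ 𝔻, Summable (fun k : ℕ => (k:ℂ) * a k * z^(k-1)) := by
    intro z hz
    have hz1 : ‖z‖ ≤ 1 := le_of_lt (mem_ball_zero_iff.mp hz)
    refine Summable.of_norm (hsum_n.of_nonneg_of_le (fun k => norm_nonneg _) (fun k => ?_))
    calc ‖(k:ℂ) * a k * z^(k-1)‖ = (k:ℝ) * ‖a k‖ * ‖z‖^(k-1) := by
          simp [norm_mul, norm_pow]
      _ ≤ (k:ℝ) * ‖a k‖ * 1 := by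
          exact mul_le_mul_of_nonneg_left (pow_le_one₀ (norm_nonneg _) hz1) (by positivity)
      _ = (k:ℝ) * ‖a k‖ := mul_one _
  have hzf' : ∀ z ∈ 𝔻, HasSum (fun k : ℕ => (k:ℂ) * a k * z^k) (z * deriv f z) := by
    intro z hz
    have h1 : HasSum (fun k : ℕ => (k:ℂ)*a k*z^(k-1)) (deriv f z) :=
      (hder z hz).deriv ▸ (hsummable_d z hz).hasSum
    have h2 := h1.mul_left z
    have he : (fun k : ℕ => (k:ℂ)*a k*z^k) = fun k : ℕ => z * ((k:ℂ)*a k*z^(k-1)) := by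
      funext k
      cases k with
      | zero => simp
      | succ n => rw [pow_succ]; push_cast; ring
    rw [he]; exact h2
  have hAsum2 : ∀ z ∈ 𝔻, HasSum (fun k : ℕ => ((k:ℂ)+1) * a (k+2) * z^(k+2)) (A z) := by
    intro z hz
    have h0 : HasSum (fun k : ℕ => ((k:ℂ)-1) * a k * z^k) (A z) := by
      have := (hzf' z hz).sub (hrep z hz)
      have he : (fun k : ℕ => ((k:ℂ)-1) * a k * z^k)
          = fun k : ℕ => (k:ℂ)*a k*z^k - a k * z^k := by funext k; ring
      rw [he]; exact this
    have h2 := (hasSum_nat_add_iff' (f := fun k : ℕ => ((k:ℂ)-1) * a k * z^k) 2).mpr h0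
    have hs2 : ∑ i ∈ Finset.range 2, ((i:ℂ)-1) * a i * z^i = 0 := by
      simp [Finset.sum_range_succ, ha0, ha1]
    rw [hs2, sub_zero] at h2
    have he : (fun n : ℕ => ((n:ℂ)+1) * a (n+2) * z^(n+2))
        = fun n : ℕ => (((n+2:ℕ):ℂ)-1) * a (n+2) * z^(n+2) := by
      funext n; push_cast; ring
    rw [he]; exact h2
  have hBsum2 : ∀ z ∈ 𝔻, HasSum (fun k : ℕ => ((D:ℂ) - ((k:ℂ)+2)*E) * a (k+2) * z^(k+2))
      (B z - ((D:ℂ)-E)*z) := by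
    intro z hz
    have h0 : HasSum (fun k : ℕ => ((D:ℂ) - (k:ℂ)*E) * a k * z^k) (B z) := by
      have := ((hrep z hz).mul_left (D:ℂ)).sub ((hzf' z hz).mul_left (E:ℂ))
      have he : (fun k : ℕ => ((D:ℂ) - (k:ℂ)*E) * a k * z^k)
          = fun k : ℕ => (D:ℂ) * (a k * z^k) - (E:ℂ) * ((k:ℂ)*a k*z^k) := by funext k; ring
      rw [he]; exact this
    have h2 := (hasSum_nat_add_iff' (f := fun k : ℕ => ((D:ℂ) - (k:ℂ)*E) * a k * z^k) 2).mpr h0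
    have hs2 : ∑ i ∈ Finset.range 2, ((D:ℂ) - (i:ℂ)*E) * a i * z^i = ((D:ℂ)-E)*z := by
      simp only [Finset.sum_range_succ, Finset.sum_range_zero, ha0, ha1]
      push_cast; ring
    rw [hs2] at h2
    have he : (fun n : ℕ => ((D:ℂ) - ((n:ℂ)+2)*E) * a (n+2) * z^(n+2))
        = fun n : ℕ => ((D:ℂ) - ((n+2:ℕ):ℂ)*E) * a (n+2) * z^(n+2) := by
      funext n; push_cast; ring
    rw [he]; exact h2
  have hfsum2 : ∀ z ∈ 𝔻, HasSum (fun k : ℕ => a (k+2) * z^(k+2)) (f z - z) := by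
    intro z hz
    have h2 := (hasSum_nat_add_iff' (f := fun k : ℕ => a k * z^k) 2).mpr (hrep z hz)
    have hs2 : ∑ i ∈ Finset.range 2, a i * z^i = z := by
      simp only [Finset.sum_range_succ, Finset.sum_range_zero, ha0, ha1]
      ring
    rw [hs2] at h2
    exact h2
  -- norm bounds
  have hnormA : ∀ z ∈ 𝔻, ‖A z‖ ≤ ‖z‖^2 * T1 := by
    intro z hz
    refine aux_norm_bound _ _ _ z (hAsum2 z hz) hsum_T1 (fun k => by positivity)
      (le_of_lt (mem_ball_zero_iff.mp hz)) (fun k => ?_)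
    rw [norm_mul, norm_mul, norm_pow]
    have : ‖((k:ℂ)+1)‖ = (k:ℝ)+1 := by
      rw [show ((k:ℂ)+1) = (((k+1:ℕ)):ℂ) by push_cast; ring, Complex.norm_natCast]
      push_cast; ring
    rw [this]
    try simp only [hu_def]
    try ring
  have hnormB : ∀ z ∈ 𝔻, ‖B z - ((D:ℂ)-E)*z‖ ≤ ‖z‖^2 * T2 := by
    intro z hz
    refine aux_norm_bound _ _ _ z (hBsum2 z hz) hsum_T2 (fun k => by positivity)
      (le_of_lt (mem_ball_zero_iff.mp hz)) (fun k => ?_)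
    rw [norm_mul, norm_mul, norm_pow]
    have : ‖((D:ℂ) - ((k:ℂ)+2)*E)‖ = |((k:ℝ)+2)*E - D| := by
      rw [show ((D:ℂ) - ((k:ℂ)+2)*E) = (((D - ((k:ℝ)+2)*E):ℝ):ℂ) by push_cast; ring]
      rw [Complex.norm_real, Real.norm_eq_abs, abs_sub_comm]
    rw [this]
    try simp only [hu_def]
    try ring
  have hnormf : ∀ z ∈ 𝔻, ‖f z - z‖ ≤ ‖z‖^2 * S := by
    intro z hz
    refine aux_norm_bound _ _ _ z (hfsum2 z hz) hsum_u hu_nonneg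
      (le_of_lt (mem_ball_zero_iff.mp hz)) (fun k => ?_)
    rw [norm_mul, norm_pow]
    try simp only [hu_def]
    try ring
  have hS0 : 0 ≤ S := tsum_nonneg hu_nonneg
  -- pointwise nonvanishing
  have hfne : ∀ z ∈ 𝔻, z ≠ 0 → f z ≠ 0 := by
    intro z hz hz0 hcontra
    have h1 := hnormf z hz
    rw [hcontra, zero_sub, norm_neg] at h1
    have hr1 : ‖z‖ < 1 := mem_ball_zero_iff.mp hz
    have hr0 : 0 < ‖z‖ := norm_pos_iff.mpr hz0
    nlinarith
  have hABlt : ∀ z ∈ 𝔻, z ≠ 0 → ‖A z‖ < ‖B z‖ := by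
    intro z hz hz0
    have hr1 : ‖z‖ < 1 := mem_ball_zero_iff.mp hz
    have hr0 : 0 < ‖z‖ := norm_pos_iff.mpr hz0
    have hna := hnormA z hz
    have hnb := hnormB z hz
    have hDEz : ‖((D:ℂ)-E)*z‖ = (D-E)*‖z‖ := by
      rw [norm_mul, show ((D:ℂ)-E) = (((D-E):ℝ):ℂ) by push_cast; ring,
        Complex.norm_real, Real.norm_eq_abs, abs_of_pos hDE]
    have h2 : (D-E)*‖z‖ - ‖z‖^2*T2 ≤ ‖B z‖ := by
      have h3 : ‖((D:ℂ)-E)*z‖ - ‖B z‖ ≤ ‖((D:ℂ)-E)*z - B z‖ := norm_sub_norm_le _ _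
      rw [norm_sub_rev (((D:ℂ)-E)*z) (B z), hDEz] at h3
      linarith
    have hr2 : 0 ≤ ‖z‖^2 := sq_nonneg _
    have key : ‖z‖^2*T1 + ‖z‖^2*T2 ≤ ‖z‖^2*(D-E) := by nlinarith
    have key2 : ‖z‖^2*(D-E) < ‖z‖*(D-E) := by nlinarith [mul_pos hr0 hDE]
    linarith
  have hBne : ∀ z ∈ 𝔻, z ≠ 0 → B z ≠ 0 := by
    intro z hz hz0 hcontra
    have := hABlt z hz hz0
    rw [hcontra, norm_zero] at this
    exact absurd this (not_lt.mpr (norm_nonneg _))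
  -- derivatives at 0
  have hfd0 : DifferentiableAt ℂ f 0 := (hfa 0 h01).differentiableAt
  have hf'd0 : DifferentiableAt ℂ (deriv f) 0 := (hf'a 0 h01).differentiableAt
  have hid : HasDerivAt (fun w : ℂ => w * deriv f w) (deriv f 0) 0 := by
    have h := (hasDerivAt_id (0:ℂ)).mul hf'd0.hasDerivAt
    exact h.congr_deriv (by simp)
  have hAderiv : HasDerivAt A 0 0 := by
    have h := hid.sub hfd0.hasDerivAt
    exact h.congr_deriv (by simp)
  have hDEC : ((D:ℂ) - E) ≠ 0 := by
    have : (D:ℂ) ≠ (E:ℂ) := by exact_mod_cast ne_of_gt hED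
    exact sub_ne_zero.mpr this
  have hBderiv : HasDerivAt B ((D:ℂ)-E) 0 := by
    have h := (hfd0.hasDerivAt.const_mul (D:ℂ)).sub (hid.const_mul (E:ℂ))
    rw [hf.2.2] at h
    exact h.congr_deriv (by ring)
  have hA00 : A 0 = 0 := by simp [hA_def, hf.2.1]
  have hB00 : B 0 = 0 := by simp [hB_def, hf.2.1]
  have hdsA : ∀ z : ℂ, z ≠ 0 → dslope A 0 z = A z / z := by
    intro z h
    rw [dslope_of_ne A h, slope_def_field, hA00, sub_zero, sub_zero]
  have hdsB : ∀ z : ℂ, z ≠ 0 → dslope B 0 z = B z / z := by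
    intro z h
    rw [dslope_of_ne B h, slope_def_field, hB00, sub_zero, sub_zero]
  have hdiff : ∀ (g : ℂ → ℂ), AnalyticOnNhd ℂ g 𝔻 → DifferentiableOn ℂ (dslope g 0) 𝔻 := by
    intro g hg z hz
    by_cases h : z = 0
    · subst h
      obtain ⟨p, hp⟩ := hg 0 h01
      exact hp.has_fpower_series_dslope_fslope.analyticAt.differentiableAt.differentiableWithinAt
    · exact ((differentiableAt_dslope_of_ne h).mpr (hg z hz).differentiableAt).differentiableWithinAt
  have hωB_ne : ∀ z ∈ 𝔻, dslope B 0 z ≠ 0 := by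
    intro z hz
    by_cases h : z = 0
    · subst h
      rw [dslope_same, hBderiv.deriv]
      exact hDEC
    · rw [hdsB z h]
      exact div_ne_zero (hBne z hz h) h
  -- assemble
  refine ⟨hf, hfne, ⟨fun z => dslope A 0 z / dslope B 0 z, ?_, ?_, ?_, ?_⟩⟩
  · exact DifferentiableOn.div (hdiff A hA_an) (hdiff B hB_an) hωB_ne
  · simp [dslope_same, hAderiv.deriv, hBderiv.deriv]
  · intro z hz
    by_cases h : z = 0
    · subst h
      simp only [dslope_same, hAderiv.deriv, hBderiv.deriv, zero_div]
      exact h01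
    · have hlt : ‖dslope A 0 z / dslope B 0 z‖ < 1 := by
        rw [hdsA z h, hdsB z h]
        have heq : (A z / z)/(B z / z) = A z / B z := by
          field_simp
        rw [heq, norm_div]
        rw [div_lt_one (lt_of_le_of_lt (norm_nonneg _) (hABlt z hz h))]
        exact hABlt z hz h
      exact mem_ball_zero_iff.mpr hlt
  · intro z hz
    by_cases h : z = 0
    · subst h
      simp [dslope_same, hAderiv.deriv, hBderiv.deriv]
    · have hωz : dslope A 0 z / dslope B 0 z = A z / B z := by
        rw [hdsA z h, hdsB z h]; field_simp
      show (if z = 0 then 1 else z * deriv f z / f z)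
          = (1 + (D:ℂ) * (dslope A 0 z / dslope B 0 z))
            / (1 + (E:ℂ) * (dslope A 0 z / dslope B 0 z))
      rw [if_neg h, hωz]
      have hfz := hfne z hz h
      have hBz := hBne z hz h
      have hBEA : B z + (E:ℂ) * A z = ((D:ℂ)-E) * f z := by
        simp only [hA_def, hB_def]; ring
      have hBDA : B z + (D:ℂ) * A z = ((D:ℂ)-E) * (z * deriv f z) := by
        simp only [hA_def, hB_def]; ring
      have hden : (1:ℂ) + (E:ℂ) * (A z / B z) = (((D:ℂ)-E) * f z) / B z := by
        rw [← hBEA]; field_simp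
      have hnum : (1:ℂ) + (D:ℂ) * (A z / B z) = (((D:ℂ)-E) * (z * deriv f z)) / B z := by
        rw [← hBDA]; field_simp
      have hden_ne : (1:ℂ) + (E:ℂ) * (A z / B z) ≠ 0 := by
        rw [hden]
        exact div_ne_zero (mul_ne_zero hDEC hfz) hBz
      rw [eq_div_iff hden_ne, hnum, hden]
      field_simp
end
end

section
/- Let ψ be a Ma-Minda function that extends to a continuous injective map on the closed unit disk. Let f ∈ 𝒜 with f'(z) ≠ 0 for z ∈ 𝔻. Then f ∈ C(ψ) if and only if for every z ∈ 𝔻 and every t ∈ [0, 2π), (1 − ψ(e^{it})) f'(z) + z f''(z) ≠ 0. -/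
open Complex Metric Set

noncomputable section

open Topology Filter

theorem stmt5 (ψ f : ℂ → ℂ) (hψ : MaMinda ψ)
    (hψc : ContinuousOn ψ (Metric.closedBall 0 1))
    (hψi : Set.InjOn ψ (Metric.closedBall 0 1))
    (hf : IsClassA f) (hf' : ∀ z ∈ 𝔻, deriv f z ≠ 0) :
    ConvexMM ψ f ↔
      ∀ z ∈ 𝔻, ∀ t ∈ Set.Ico (0:ℝ) (2*Real.pi),
        (1 - ψ (Complex.exp (Complex.I * t))) * deriv f z + z * deriv (deriv f) z ≠ 0 := by
  classical
  obtain ⟨hψd, hψinj, hψre, hψ0, hψd0re, hψd0im, -⟩ := hψ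
  have hDopen : IsOpen 𝔻 := Metric.isOpen_ball
  have h0D : (0:ℂ) ∈ 𝔻 := Metric.mem_ball_self one_pos
  have hDK : 𝔻 ⊆ Metric.closedBall (0:ℂ) 1 := Metric.ball_subset_closedBall
  have hDpre : IsPreconnected 𝔻 := (convex_ball (0:ℂ) 1).isPreconnected
  set h : ℂ → ℂ := fun z => 1 + z * deriv (deriv f) z / deriv f z with hhdef
  have hfa : AnalyticOnNhd ℂ f 𝔻 := hf.1.analyticOnNhd hDopen
  have hF1 : AnalyticOnNhd ℂ (deriv f) 𝔻 := hfa.deriv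
  have hG1 : AnalyticOnNhd ℂ (deriv (deriv f)) 𝔻 := hF1.deriv
  have hh : ∀ z ∈ 𝔻, AnalyticAt ℂ h z := fun z hz =>
    analyticAt_const.add ((analyticAt_id.mul (hG1 z hz)).div (hF1 z hz) (hf' z hz))
  have hh0 : h 0 = 1 := by simp [hhdef]
  have hψa : AnalyticOnNhd ℂ ψ 𝔻 := hψd.analyticOnNhd hDopen
  have habs : ∀ t : ℝ, ‖Complex.exp (Complex.I * t)‖ = 1 := by
    intro t; rw [Complex.norm_exp]; simp
  constructor
  · rintro ⟨-, -, ω, hωd, hω0, hωm, hωe⟩ z hz t ht heq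
    set e := Complex.exp (Complex.I * t) with hedef
    have hFz := hf' z hz
    have h1 : h z = ψ e := by
      rw [hhdef]
      field_simp
      linear_combination heq
    have h3 : ω z = e := hψi (hDK (hωm z hz))
      (by rw [Metric.mem_closedBall, Complex.dist_eq, sub_zero, habs t])
      (by rw [← hωe z hz]; exact h1)
    have h4 := hωm z hz
    rw [h3, 𝔻, Metric.mem_ball, Complex.dist_eq, sub_zero, habs t] at h4
    exact lt_irrefl 1 h4
  · intro H
    have havoid : ∀ z ∈ 𝔻, ∀ w : ℂ, ‖w‖ = 1 → h z ≠ ψ w := by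
      intro z hz w hw hcontra
      obtain ⟨t, ht, hwt⟩ : ∃ t ∈ Set.Ico (0:ℝ) (2*Real.pi), Complex.exp (Complex.I * t) = w := by
        have harg : Complex.exp (↑w.arg * Complex.I) = w := by
          have h5 := Complex.norm_mul_exp_arg_mul_I w
          rwa [hw, Complex.ofReal_one, one_mul] at h5
        by_cases h0 : 0 ≤ w.arg
        · exact ⟨w.arg, ⟨h0, lt_of_le_of_lt (Complex.arg_le_pi w)
            (by linarith [Real.pi_pos])⟩, by rw [mul_comm]; exact harg⟩
        · refine ⟨w.arg + 2*Real.pi, ⟨by linarith [Complex.neg_pi_lt_arg w, Real.pi_pos],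
            by linarith⟩, ?_⟩
          push_cast
          rw [show Complex.I * ((w.arg : ℂ) + 2*Real.pi) =
            (w.arg : ℂ) * Complex.I + 2*Real.pi*Complex.I by ring,
            Complex.exp_add, harg, Complex.exp_two_pi_mul_I, mul_one]
      apply H z hz t ht
      rw [hwt, ← hcontra, hhdef]
      have hFz := hf' z hz
      field_simp
      ring
    -- the image of h on 𝔻 is inside ψ '' 𝔻
    have hne : ¬ ∃ w, ∀ z ∈ 𝔻, ψ z = w := by
      rintro ⟨w, hwc⟩
      have h12 : (1/2 : ℂ) ∈ 𝔻 := by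
        rw [𝔻, Metric.mem_ball, Complex.dist_eq, sub_zero]
        norm_num
      exact (by norm_num : (0:ℂ) ≠ 1/2) (hψinj h0D h12 (by rw [hwc 0 h0D, hwc _ h12]))
    have hU : IsOpen (ψ '' 𝔻) := by
      rcases hψa.is_constant_or_isOpen hDpre with hc | hop
      · exact absurd hc hne
      · exact hop 𝔻 subset_rfl hDopen
    have hKcpt : IsCompact (ψ '' Metric.closedBall 0 1) :=
      (isCompact_closedBall (0:ℂ) 1).image_of_continuousOn hψc
    have hhU : ∀ z ∈ 𝔻, h z ∈ ψ '' 𝔻 := by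
      have hSp : IsPreconnected (h '' 𝔻) := hDpre.image h
        (fun z hz => (hh z hz).continuousAt.continuousWithinAt)
      have hsub : h '' 𝔻 ⊆ ψ '' 𝔻 ∪ (ψ '' Metric.closedBall 0 1)ᶜ := by
        rintro y ⟨z, hz, rfl⟩
        by_cases hy : h z ∈ ψ '' Metric.closedBall 0 1
        · obtain ⟨w, hwK, hwe⟩ := hy
          rcases lt_or_eq_of_le (mem_closedBall_zero_iff.mp hwK) with hlt | heq1
          · exact Or.inl ⟨w, mem_ball_zero_iff.mpr hlt, hwe⟩
          · exact absurd hwe.symm (havoid z hz w (by rw [← heq1]))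
        · exact Or.inr hy
      have hdisj : Disjoint (ψ '' 𝔻) (ψ '' Metric.closedBall 0 1)ᶜ :=
        disjoint_compl_right.mono_left (Set.image_mono (f := ψ) hDK)
      have hint : ((h '' 𝔻) ∩ (ψ '' 𝔻)).Nonempty :=
        ⟨1, ⟨0, h0D, hh0⟩, ⟨0, h0D, hψ0⟩⟩
      have := hSp.subset_left_of_subset_union hU hKcpt.isClosed.isOpen_compl hdisj hsub hint
      exact fun z hz => this (Set.mem_image_of_mem h hz)
    -- construct the subordinating function via the compact inverse
    haveI : CompactSpace ↥(Metric.closedBall (0:ℂ) 1) :=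
      isCompact_iff_compactSpace.mp (isCompact_closedBall (0:ℂ) 1)
    have hq : Continuous (fun x : ↥(Metric.closedBall (0:ℂ) 1) =>
        (⟨ψ x, Set.mem_image_of_mem ψ x.2⟩ : ↥(ψ '' Metric.closedBall 0 1))) :=
      Continuous.subtype_mk (hψc.restrict) _
    have hbij : Function.Bijective (fun x : ↥(Metric.closedBall (0:ℂ) 1) =>
        (⟨ψ x, Set.mem_image_of_mem ψ x.2⟩ : ↥(ψ '' Metric.closedBall 0 1))) := by
      constructor
      · intro a b hab
        exact Subtype.ext (hψi a.2 b.2 (congrArg Subtype.val hab))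
      · rintro ⟨y, w, hw, rfl⟩
        exact ⟨⟨w, hw⟩, rfl⟩
    have hqE : Continuous ⇑(Equiv.ofBijective _ hbij) := hq
    set T := hqE.homeoOfEquivCompactToT2 with hTdef
    set invψ : ℂ → ℂ := fun y =>
      if hy : y ∈ ψ '' Metric.closedBall 0 1 then
        ((T.symm ⟨y, hy⟩ : ↥(Metric.closedBall (0:ℂ) 1)) : ℂ) else 0 with hinvdef
    have hinv : ∀ y, y ∈ ψ '' Metric.closedBall 0 1 →
        invψ y ∈ Metric.closedBall (0:ℂ) 1 ∧ ψ (invψ y) = y := by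
      intro y hy
      have h5 : invψ y = ((T.symm ⟨y, hy⟩ : ↥(Metric.closedBall (0:ℂ) 1)) : ℂ) := dif_pos hy
      rw [h5]
      refine ⟨(T.symm ⟨y, hy⟩).2, ?_⟩
      exact congrArg Subtype.val (T.apply_symm_apply ⟨y, hy⟩)
    have hinvc : ContinuousOn invψ (ψ '' Metric.closedBall 0 1) := by
      rw [continuousOn_iff_continuous_restrict]
      have h5 : Set.domRestrict (ψ '' Metric.closedBall 0 1) invψ =
          fun x => ((T.symm x : ↥(Metric.closedBall (0:ℂ) 1)) : ℂ) := by
        funext x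
        have h6 : invψ ↑x = ((T.symm ⟨↑x, x.2⟩ : ↥(Metric.closedBall (0:ℂ) 1)) : ℂ) :=
          dif_pos x.2
        exact h6
      rw [h5]
      exact continuous_subtype_val.comp T.symm.continuous
    set ω : ℂ → ℂ := fun z => invψ (h z) with hωdef
    have hωmem : ∀ z ∈ 𝔻, ω z ∈ 𝔻 ∧ ψ (ω z) = h z := by
      intro z hz
      obtain ⟨w, hw, hwe⟩ := hhU z hz
      have hy : h z ∈ ψ '' Metric.closedBall 0 1 := ⟨w, hDK hw, hwe⟩
      obtain ⟨hK1, hK2⟩ := hinv (h z) hy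
      have h6 : ω z = w := hψi hK1 (hDK hw) (hK2.trans hwe.symm)
      exact ⟨by rw [h6]; exact hw, hK2⟩
    have hω0 : ω 0 = 0 := hψi (hDK (hωmem 0 h0D).1) (hDK h0D)
      (by rw [(hωmem 0 h0D).2, hh0, hψ0])
    have hωc : ∀ z₀ ∈ 𝔻, ContinuousAt ω z₀ := by
      intro z₀ hz₀
      have hmem : ψ '' Metric.closedBall 0 1 ∈ 𝓝 (h z₀) :=
        Filter.mem_of_superset (hU.mem_nhds (hhU z₀ hz₀)) (Set.image_mono (f := ψ) hDK)
      exact (hinvc.continuousAt hmem).comp (hh z₀ hz₀).continuousAt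
    -- differentiability at points where the derivative of ψ does not vanish
    have key : ∀ z₀ ∈ 𝔻, deriv ψ (ω z₀) ≠ 0 → DifferentiableAt ℂ ω z₀ := by
      intro z₀ hz₀ hd
      have hw₀ : ω z₀ ∈ 𝔻 := (hωmem z₀ hz₀).1
      obtain ⟨p, hp⟩ := hψa (ω z₀) hw₀
      have hs0 := hp.hasStrictDerivAt
      have hs : HasStrictDerivAt ψ (deriv ψ (ω z₀)) (ω z₀) := by
        rwa [hs0.hasDerivAt.deriv]
      have Gs := hs.hasStrictFDerivAt_equiv hd
      have hψw : ψ (ω z₀) = h z₀ := (hωmem z₀ hz₀).2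
      have htend : Filter.Tendsto h (𝓝 z₀) (𝓝 (ψ (ω z₀))) := by
        rw [hψw]; exact (hh z₀ hz₀).continuousAt
      have ev2 := htend.eventually Gs.eventually_right_inverse
      have hgc : Filter.Tendsto (Gs.localInverse ψ _ (ω z₀)) (𝓝 (ψ (ω z₀))) (𝓝 (ω z₀)) := by
        have h7 := Gs.localInverse_continuousAt
        rwa [ContinuousAt, Gs.localInverse_apply_image] at h7
      have ev3 : ∀ᶠ z in 𝓝 z₀, Gs.localInverse ψ _ (ω z₀) (h z) ∈ 𝔻 :=
        (hgc.comp htend).eventually (hDopen.eventually_mem hw₀)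
      have ev1 : ∀ᶠ z in 𝓝 z₀, z ∈ 𝔻 := hDopen.eventually_mem hz₀
      have hEv : ω =ᶠ[𝓝 z₀] fun z => Gs.localInverse ψ _ (ω z₀) (h z) := by
        filter_upwards [ev1, ev2, ev3] with z h1 h2 h3
        exact hψi (hDK (hωmem z h1).1) (hDK h3) (by rw [(hωmem z h1).2, h2])
      rw [hEv.differentiableAt_iff]
      have hgdiff : DifferentiableAt ℂ (Gs.localInverse ψ _ (ω z₀)) (h z₀) := by
        rw [← hψw]; exact Gs.to_localInverse.differentiableAt
      exact hgdiff.comp z₀ (hh z₀ hz₀).differentiableAt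
    have hdiff : ∀ z₀ ∈ 𝔻, DifferentiableAt ℂ ω z₀ := by
      intro z₀ hz₀
      by_cases hbad : deriv ψ (ω z₀) = 0
      · rcases (hh z₀ hz₀).eventually_eq_or_eventually_ne
            (analyticAt_const (v := ψ (ω z₀))) with hc | hne
        · have heqD : Set.EqOn h (fun _ => ψ (ω z₀)) 𝔻 :=
            AnalyticOnNhd.eqOn_of_preconnected_of_eventuallyEq
              (fun z hz => hh z hz) analyticOnNhd_const hDpre hz₀ hc
          have hcw : ∀ z ∈ 𝔻, ω z = ω z₀ := fun z hz =>
            hψi (hDK (hωmem z hz).1) (hDK (hωmem z₀ hz₀).1)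
              (by rw [(hωmem z hz).2]; exact heqD hz)
          have hEv : ω =ᶠ[𝓝 z₀] fun _ => ω z₀ := by
            filter_upwards [hDopen.eventually_mem hz₀] with z hz using hcw z hz
          exact hEv.differentiableAt_iff.mpr (differentiableAt_const _)
        · have hψ'a : AnalyticAt ℂ (deriv ψ) (ω z₀) := hψa.deriv (ω z₀) (hωmem z₀ hz₀).1
          rcases hψ'a.eventually_eq_zero_or_eventually_ne_zero with hzero | hiso
          · exfalso
            obtain ⟨r, hr0, hrp⟩ := Metric.eventually_nhds_iff.mp
              (hzero.and (hDopen.eventually_mem (hωmem z₀ hz₀).1))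
            have hsub : Metric.ball (ω z₀) r ⊆ 𝔻 := fun x hx =>
              (hrp (Metric.mem_ball.mp hx)).2
            have hm1 : ω z₀ + (r/2 : ℝ) ∈ Metric.ball (ω z₀) r := by
              rw [Metric.mem_ball, Complex.dist_eq]
              simp only [add_sub_cancel_left]
              rw [Complex.norm_real, Real.norm_of_nonneg (by linarith)]
              linarith
            have hconst : ψ (ω z₀ + (r/2 : ℝ)) = ψ (ω z₀) :=
              Convex.is_const_of_fderivWithin_eq_zero (convex_ball (ω z₀) r)
                (hψd.mono hsub)
                (fun x hx => by
                  rw [fderivWithin_of_isOpen Metric.isOpen_ball hx, ← toSpanSingleton_deriv,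
                    (hrp (Metric.mem_ball.mp hx)).1]
                  apply ContinuousLinearMap.ext_ring
                  simp)
                hm1 (Metric.mem_ball_self hr0)
            have h8 := hψinj (hsub hm1) (hsub (Metric.mem_ball_self hr0)) hconst
            have hr2 : ((r/2 : ℝ) : ℂ) ≠ 0 := by
              exact_mod_cast (ne_of_gt (by linarith : (0:ℝ) < r/2))
            exact hr2 (by rwa [add_eq_left] at h8)
          · have hω' := Filter.Tendsto.eventually (hωc z₀ hz₀)
              (eventually_nhdsWithin_iff.mp hiso)
            have hpunct : ∀ᶠ z in 𝓝[≠] z₀, DifferentiableAt ℂ ω z := by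
              filter_upwards [hne,
                (hω'.and (hDopen.eventually_mem hz₀)).filter_mono nhdsWithin_le_nhds]
                with z h1 h2
              have hzD : z ∈ 𝔻 := h2.2
              have hωne : deriv ψ (ω z) ≠ 0 := h2.1 (Set.mem_compl_singleton_iff.mpr
                (fun hEq => h1 ((hωmem z hzD).2.symm.trans (congrArg ψ hEq))))
              exact key z hzD hωne
            exact (Complex.analyticAt_of_differentiable_on_punctured_nhds_of_continuousAt
              hpunct (hωc z₀ hz₀)).differentiableAt
      · exact key z₀ hz₀ hbad
    exact ⟨hf, hf', ω, fun z hz => (hdiff z hz).differentiableWithinAt, hω0,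
      fun z hz => (hωmem z hz).1, fun z hz => ((hωmem z hz).2).symm⟩
end
end

section
/- Let ψ be a Ma-Minda function that extends to a continuous injective map on the closed unit disk. Let f(z) = z + Σ_{k≥2} a_k z^k ∈ 𝒜 with f'(z) ≠ 0 for z ∈ 𝔻. If for every t ∈ [0, 2π) one has Σ_{k=2}^∞ k · |(k − ψ(e^{it}))/(1 − ψ(e^{it}))| · |a_k| ≤ 1, then f ∈ C(ψ). -/
open Complex Metric Set

noncomputable section

namespace Aux6

open Filter Function Topology

lemma hD_open : IsOpen 𝔻 := isOpen_ball

lemma hD_conn : IsPreconnected 𝔻 := (convex_ball (0:ℂ) 1).isPreconnected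

lemma mem_D {z : ℂ} : z ∈ 𝔻 ↔ ‖z‖ < 1 := mem_ball_zero_iff

lemma D_subset : 𝔻 ⊆ Metric.closedBall 0 1 := ball_subset_closedBall

lemma zero_mem_D : (0:ℂ) ∈ 𝔻 := by simp [mem_D]

lemma boundary_param {u : ℂ} (hu : ‖u‖ = 1) :
    ∃ t ∈ Set.Ico (0:ℝ) (2*Real.pi), Complex.exp (Complex.I * t) = u := by
  have hpi := Real.pi_pos
  have harg := Complex.arg_mem_Ioc u
  have habs : ((‖u‖ : ℝ) : ℂ) = 1 := by
    rw [hu]; norm_num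
  have hexp : Complex.exp (u.arg * Complex.I) = u := by
    have h := Complex.norm_mul_exp_arg_mul_I u
    rwa [habs, one_mul] at h
  rcases le_or_gt 0 u.arg with h | h
  · refine ⟨u.arg, ⟨h, lt_of_le_of_lt harg.2 (by linarith)⟩, ?_⟩
    rw [mul_comm]; exact hexp
  · refine ⟨u.arg + 2*Real.pi, ⟨by linarith [harg.1], by linarith⟩, ?_⟩
    have h2 : Complex.exp (Complex.I * (↑(u.arg + 2*Real.pi) : ℂ))
        = Complex.exp (u.arg * Complex.I) * Complex.exp (2*Real.pi*Complex.I) := by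
      rw [← Complex.exp_add]; push_cast; ring_nf
    rw [h2, Complex.exp_two_pi_mul_I, mul_one, hexp]

section Inverse

variable {ψ : ℂ → ℂ}

lemma chi_mem {w : ℂ} (hw : w ∈ ψ '' 𝔻) :
    invFunOn ψ 𝔻 w ∈ 𝔻 ∧ ψ (invFunOn ψ 𝔻 w) = w := by
  obtain ⟨x, hx, rfl⟩ := hw
  exact ⟨Function.invFunOn_mem ⟨x, hx, rfl⟩, Function.invFunOn_eq ⟨x, hx, rfl⟩⟩

lemma chi_psi (hψi : Set.InjOn ψ (Metric.closedBall 0 1)) {z : ℂ} (hz : z ∈ 𝔻) :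
    invFunOn ψ 𝔻 (ψ z) = z :=
  (hψi.mono D_subset).leftInvOn_invFunOn hz

lemma V_open (hψd : DifferentiableOn ℂ ψ 𝔻) (hψi : Set.InjOn ψ (Metric.closedBall 0 1)) :
    IsOpen (ψ '' 𝔻) := by
  have han : AnalyticOnNhd ℂ ψ 𝔻 := hψd.analyticOnNhd hD_open
  rcases han.is_constant_or_isOpen hD_conn with ⟨w, hw⟩ | h
  · exfalso
    have h0 : (0:ℂ) ∈ 𝔻 := zero_mem_D
    have h2 : (1/2 : ℂ) ∈ 𝔻 := by
      rw [mem_D]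
      have : ‖(1/2 : ℂ)‖ = 1/2 := by
        rw [norm_div, norm_one]
        simp
      rw [this]; norm_num
    have := (hψi.mono D_subset) h0 h2 (by rw [hw 0 h0, hw _ h2])
    norm_num at this
  · exact h 𝔻 subset_rfl hD_open

lemma chi_contOn (hψc : ContinuousOn ψ (Metric.closedBall 0 1))
    (hψi : Set.InjOn ψ (Metric.closedBall 0 1)) :
    ContinuousOn (invFunOn ψ 𝔻) (ψ '' 𝔻) := by
  intro w₀ hw₀
  obtain ⟨hz₀D, hz₀⟩ := chi_mem hw₀
  rw [ContinuousWithinAt, _root_.tendsto_nhds]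
  intro N hN hz₀N
  have hK : IsCompact (ψ '' (Metric.closedBall 0 1 \ N)) :=
    ((isCompact_closedBall (0:ℂ) 1).diff hN).image_of_continuousOn (hψc.mono diff_subset)
  have hw₀K : w₀ ∉ ψ '' (Metric.closedBall 0 1 \ N) := by
    rintro ⟨u, ⟨hu, huN⟩, hu2⟩
    have : u = invFunOn ψ 𝔻 w₀ := hψi hu (D_subset hz₀D) (by rw [hu2, hz₀])
    exact huN (this ▸ hz₀N)
  have hmem : (ψ '' (Metric.closedBall 0 1 \ N))ᶜ ∈ 𝓝 w₀ :=
    hK.isClosed.isOpen_compl.mem_nhds hw₀K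
  filter_upwards [nhdsWithin_le_nhds hmem, self_mem_nhdsWithin] with x hx hxV
  obtain ⟨hxD, hxψ⟩ := chi_mem hxV
  by_contra hnot
  exact hx ⟨invFunOn ψ 𝔻 x, ⟨D_subset hxD, hnot⟩, hxψ⟩

lemma deriv_strict (hψd : DifferentiableOn ℂ ψ 𝔻) {z : ℂ} (hz : z ∈ 𝔻) :
    HasStrictDerivAt ψ (deriv ψ z) z := by
  obtain ⟨p, hp⟩ := hψd.analyticOnNhd hD_open z hz
  have h1 := hp.hasStrictDerivAt
  rw [h1.hasDerivAt.deriv]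
  exact h1

lemma chi_diffAt_of_deriv_ne (hψd : DifferentiableOn ℂ ψ 𝔻)
    (hψi : Set.InjOn ψ (Metric.closedBall 0 1)) {w : ℂ} (hw : w ∈ ψ '' 𝔻)
    (hne : deriv ψ (invFunOn ψ 𝔻 w) ≠ 0) : DifferentiableAt ℂ (invFunOn ψ 𝔻) w := by
  obtain ⟨hzD, hzψ⟩ := chi_mem hw
  have hst := deriv_strict hψd hzD
  have hev : ∀ᶠ x in 𝓝 (invFunOn ψ 𝔻 w), invFunOn ψ 𝔻 (ψ x) = x :=
    (hD_open.eventually_mem hzD).mono fun x hx => chi_psi hψi hx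
  have h := hst.to_local_left_inverse hne hev
  rw [hzψ] at h
  exact (HasStrictDerivAt.hasDerivAt (f := invFunOn ψ 𝔻) (f' := (deriv ψ (invFunOn ψ 𝔻 w))⁻¹) h).differentiableAt

lemma deriv_ne_punctured (hψd : DifferentiableOn ℂ ψ 𝔻) (hψ0 : deriv ψ 0 ≠ 0)
    {z : ℂ} (hz : z ∈ 𝔻) : ∀ᶠ x in 𝓝[≠] z, deriv ψ x ≠ 0 := by
  have hd : AnalyticOnNhd ℂ (deriv ψ) 𝔻 := (hψd.analyticOnNhd hD_open).deriv
  rcases (hd z hz).eventually_eq_zero_or_eventually_ne_zero with h | h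
  · exfalso
    have heq : Set.EqOn (deriv ψ) (fun _ => (0:ℂ)) 𝔻 :=
      hd.eqOn_of_preconnected_of_eventuallyEq analyticOnNhd_const hD_conn hz h
    exact hψ0 (heq zero_mem_D)
  · exact h

lemma chi_diffAt (hψd : DifferentiableOn ℂ ψ 𝔻)
    (hψc : ContinuousOn ψ (Metric.closedBall 0 1))
    (hψi : Set.InjOn ψ (Metric.closedBall 0 1)) (hψ0 : deriv ψ 0 ≠ 0)
    {w : ℂ} (hw : w ∈ ψ '' 𝔻) : DifferentiableAt ℂ (invFunOn ψ 𝔻) w := by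
  obtain ⟨hzD, hzψ⟩ := chi_mem hw
  by_cases hne : deriv ψ (invFunOn ψ 𝔻 w) ≠ 0
  · exact chi_diffAt_of_deriv_ne hψd hψi hw hne
  have hVn : ψ '' 𝔻 ∈ 𝓝 w := (V_open hψd hψi).mem_nhds hw
  have hcont : ContinuousAt (invFunOn ψ 𝔻) w := (chi_contOn hψc hψi w hw).continuousAt hVn
  have htend : Tendsto (invFunOn ψ 𝔻) (𝓝[≠] w) (𝓝[≠] (invFunOn ψ 𝔻 w)) := by
    rw [tendsto_nhdsWithin_iff]
    refine ⟨hcont.tendsto.mono_left nhdsWithin_le_nhds, ?_⟩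
    filter_upwards [nhdsWithin_le_nhds hVn, self_mem_nhdsWithin] with x hxV hxne
    intro hcontra
    apply hxne
    have : ψ (invFunOn ψ 𝔻 x) = ψ (invFunOn ψ 𝔻 w) := by rw [hcontra]
    rw [(chi_mem hxV).2, hzψ] at this
    exact this
  have hd : ∀ᶠ x in 𝓝[≠] w, DifferentiableAt ℂ (invFunOn ψ 𝔻) x := by
    filter_upwards [htend.eventually (deriv_ne_punctured hψd hψ0 hzD),
      nhdsWithin_le_nhds hVn] with x h1 h2
    exact chi_diffAt_of_deriv_ne hψd hψi h2 h1
  exact (Complex.analyticAt_of_differentiable_on_punctured_nhds_of_continuousAt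
    hd hcont).differentiableAt

end Inverse

section Series

variable {a : ℕ → ℂ} {f : ℂ → ℂ}


lemma bound1 {a : ℕ → ℂ} (k : ℕ) {y : ℂ} (hy : y ∈ 𝔻) :
    ‖a k * ((k:ℂ) * y ^ (k-1))‖ ≤ (k:ℝ) * ‖a k‖ := by
  rw [norm_mul, norm_mul, norm_pow, Complex.norm_natCast]
  have h1 : ‖y‖ ^ (k-1) ≤ 1 := pow_le_one₀ (norm_nonneg y) (mem_D.1 hy).le
  calc ‖a k‖ * ((k:ℝ) * ‖y‖ ^ (k-1)) ≤ ‖a k‖ * ((k:ℝ) * 1) := by gcongr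
    _ = (k:ℝ) * ‖a k‖ := by ring

lemma bound2 {a : ℕ → ℂ} (k : ℕ) {y : ℂ} (hy : y ∈ 𝔻) :
    ‖a k * ((k:ℂ) * (((k-1:ℕ):ℂ) * y ^ (k-1-1)))‖ ≤ (k:ℝ) * ((k-1:ℕ):ℝ) * ‖a k‖ := by
  rw [norm_mul, norm_mul, norm_mul, norm_pow, Complex.norm_natCast, Complex.norm_natCast]
  have h1 : ‖y‖ ^ (k-1-1) ≤ 1 := pow_le_one₀ (norm_nonneg y) (mem_D.1 hy).le
  calc ‖a k‖ * ((k:ℝ) * (((k-1:ℕ):ℝ) * ‖y‖ ^ (k-1-1)))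
      ≤ ‖a k‖ * ((k:ℝ) * (((k-1:ℕ):ℝ) * 1)) := by gcongr
    _ = (k:ℝ) * ((k-1:ℕ):ℝ) * ‖a k‖ := by ring

lemma hasDerivAt_rep (hu1 : Summable fun k : ℕ => (k:ℝ) * ‖a k‖)
    (hrep : ∀ z ∈ 𝔻, HasSum (fun k => a k * z ^ k) (f z)) {z : ℂ} (hz : z ∈ 𝔻) :
    HasDerivAt f (∑' k : ℕ, a k * ((k:ℂ) * z ^ (k-1))) z := by
  have hterm : ∀ (k:ℕ) (y:ℂ), y ∈ 𝔻 → HasDerivAt (fun x => a k * x ^ k)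
      (a k * ((k:ℂ) * y ^ (k-1))) y := fun k y _ => (hasDerivAt_pow k y).const_mul (a k)
  have hbd : ∀ (k:ℕ) (y:ℂ), y ∈ 𝔻 → ‖a k * ((k:ℂ) * y ^ (k-1))‖ ≤ (k:ℝ) * ‖a k‖ :=
    fun k y hy => bound1 k hy
  have h0 : Summable (fun k : ℕ => a k * (0:ℂ) ^ k) := by
    apply summable_of_ne_finset_zero (s := {0})
    intro k hk
    simp only [Finset.mem_singleton] at hk
    simp [zero_pow hk]
  have H := hasDerivAt_tsum_of_isPreconnected hu1 hD_open hD_conn hterm hbd zero_mem_D h0 hz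
  apply H.congr_of_eventuallyEq
  filter_upwards [hD_open.eventually_mem hz] with x hx
  exact ((hrep x hx).tsum_eq).symm

lemma hasDerivAt_rep2 (hu2 : Summable fun k : ℕ => (k:ℝ) * ((k-1:ℕ):ℝ) * ‖a k‖)
    {z : ℂ} (hz : z ∈ 𝔻) :
    HasDerivAt (fun y => ∑' k : ℕ, a k * ((k:ℂ) * y ^ (k-1)))
      (∑' k : ℕ, a k * ((k:ℂ) * (((k-1:ℕ):ℂ) * z ^ (k-1-1)))) z := by
  have hterm : ∀ (k:ℕ) (y:ℂ), y ∈ 𝔻 → HasDerivAt (fun x => a k * ((k:ℂ) * x ^ (k-1)))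
      (a k * ((k:ℂ) * (((k-1:ℕ):ℂ) * y ^ (k-1-1)))) y := by
    intro k y _
    have h := (hasDerivAt_pow (k-1) y).const_mul (a k * (k:ℂ))
    simpa [mul_assoc] using h
  have hbd : ∀ (k:ℕ) (y:ℂ), y ∈ 𝔻 →
      ‖a k * ((k:ℂ) * (((k-1:ℕ):ℂ) * y ^ (k-1-1)))‖ ≤ (k:ℝ) * ((k-1:ℕ):ℝ) * ‖a k‖ :=
    fun k y hy => bound2 k hy
  have h0 : Summable (fun k : ℕ => a k * ((k:ℂ) * (0:ℂ) ^ (k-1))) := by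
    apply summable_of_ne_finset_zero (s := {0, 1})
    intro k hk
    simp only [Finset.mem_insert, Finset.mem_singleton] at hk
    push_neg at hk
    have : k - 1 ≠ 0 := by omega
    simp [zero_pow this]
  exact hasDerivAt_tsum_of_isPreconnected hu2 hD_open hD_conn hterm hbd zero_mem_D h0 hz

lemma key_ne {z w P0 Q0 : ℂ} (hz : z ∈ 𝔻) (hw1 : w ≠ 1)
    (ha0 : a 0 = 0) (ha1 : a 1 = 1)
    (hPsum : HasSum (fun k : ℕ => a k * ((k:ℂ) * z ^ (k-1))) P0)
    (hQsum : HasSum (fun k : ℕ => a k * ((k:ℂ) * (((k-1:ℕ):ℂ) * z ^ (k-1-1)))) Q0)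
    (hS : Summable (fun n : ℕ => ((n+2:ℕ):ℝ) * ‖(((n+2:ℕ):ℂ) - w) / (1 - w)‖ * ‖a (n+2)‖))
    (hle : ∑' n : ℕ, ((n+2:ℕ):ℝ) * ‖(((n+2:ℕ):ℂ) - w) / (1 - w)‖ * ‖a (n+2)‖ ≤ 1) :
    z * Q0 - (w - 1) * P0 ≠ 0 := by
  have h1wne : (1:ℂ) - w ≠ 0 := sub_ne_zero.2 (Ne.symm hw1)
  have h1wpos : 0 < ‖(1:ℂ) - w‖ := norm_pos_iff.2 h1wne
  set c : ℕ → ℂ := fun k =>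
    z * (a k * ((k:ℂ) * (((k-1:ℕ):ℂ) * z ^ (k-1-1)))) - (w-1) * (a k * ((k:ℂ) * z ^ (k-1)))
    with hc
  have hcS : HasSum c (z * Q0 - (w-1) * P0) := (hQsum.mul_left z).sub (hPsum.mul_left (w-1))
  have h2 : HasSum (fun n => c (n+2)) ((z * Q0 - (w-1) * P0) - ∑ i ∈ Finset.range 2, c i) :=
    (hasSum_nat_add_iff' 2).2 hcS
  have hrange : ∑ i ∈ Finset.range 2, c i = 1 - w := by
    rw [Finset.sum_range_succ, Finset.sum_range_one]
    simp only [hc, ha0, ha1]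
    norm_num
  rw [hrange] at h2
  set r : ℕ → ℂ := fun n => ((n+2:ℕ):ℂ) * a (n+2) * (((n+2:ℕ):ℂ) - w) * z ^ (n+1) with hr
  have hcr : ∀ n, c (n+2) = r n := by
    intro n
    simp only [hc, hr, show n+2-1-1 = n from rfl, show n+2-1 = n+1 from rfl]
    push_cast
    ring
  have h3 : HasSum r ((z * Q0 - (w-1) * P0) - (1 - w)) := by
    rw [show r = fun n => c (n+2) from (funext hcr).symm]
    exact h2
  have hrb : ∀ n, ‖r n‖ ≤ (‖z‖ * ‖(1:ℂ)-w‖) *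
      (((n+2:ℕ):ℝ) * ‖(((n+2:ℕ):ℂ) - w) / (1 - w)‖ * ‖a (n+2)‖) := by
    intro n
    have e1 : ‖r n‖ = (((n+2:ℕ):ℝ) * ‖(((n+2:ℕ):ℂ) - w)‖ * ‖a (n+2)‖) * ‖z‖ ^ (n+1) := by
      simp only [hr, norm_mul, norm_pow, Complex.norm_natCast]
      ring
    have e2 : (‖z‖ * ‖(1:ℂ)-w‖) * (((n+2:ℕ):ℝ) * ‖(((n+2:ℕ):ℂ) - w) / (1 - w)‖ * ‖a (n+2)‖)
        = (((n+2:ℕ):ℝ) * ‖(((n+2:ℕ):ℂ) - w)‖ * ‖a (n+2)‖) * ‖z‖ := by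
      rw [norm_div]
      rw [show (‖z‖ * ‖(1:ℂ)-w‖) * (((n+2:ℕ):ℝ) * (‖(((n+2:ℕ):ℂ) - w)‖ / ‖(1:ℂ) - w‖) * ‖a (n+2)‖)
        = (((n+2:ℕ):ℝ) * (‖(((n+2:ℕ):ℂ) - w)‖ / ‖(1:ℂ) - w‖ * ‖(1:ℂ) - w‖) * ‖a (n+2)‖) * ‖z‖
        from by ring]
      rw [div_mul_cancel₀ _ (ne_of_gt h1wpos)]
    rw [e1, e2]
    have hz1 : ‖z‖ ^ (n+1) ≤ ‖z‖ := by
      calc ‖z‖ ^ (n+1) = ‖z‖ ^ n * ‖z‖ := pow_succ _ _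
      _ ≤ 1 * ‖z‖ := by
        apply mul_le_mul_of_nonneg_right (pow_le_one₀ (norm_nonneg z) (mem_D.1 hz).le)
          (norm_nonneg z)
      _ = ‖z‖ := one_mul _
    have hpos : 0 ≤ ((n+2:ℕ):ℝ) * ‖(((n+2:ℕ):ℂ) - w)‖ * ‖a (n+2)‖ := by positivity
    exact mul_le_mul_of_nonneg_left hz1 hpos
  have hSum_r : Summable (fun n => ‖r n‖) :=
    Summable.of_nonneg_of_le (fun n => norm_nonneg _) hrb (hS.mul_left _)
  have hnorm : ‖(z * Q0 - (w-1) * P0) - (1 - w)‖ ≤ (‖z‖ * ‖(1:ℂ)-w‖) * 1 := by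
    calc ‖(z * Q0 - (w-1) * P0) - (1 - w)‖ = ‖∑' n, r n‖ := by rw [h3.tsum_eq]
      _ ≤ ∑' n, ‖r n‖ := norm_tsum_le_tsum_norm hSum_r
      _ ≤ ∑' n, (‖z‖ * ‖(1:ℂ)-w‖) *
          (((n+2:ℕ):ℝ) * ‖(((n+2:ℕ):ℂ) - w) / (1 - w)‖ * ‖a (n+2)‖) :=
        Summable.tsum_le_tsum hrb hSum_r (hS.mul_left _)
      _ = (‖z‖ * ‖(1:ℂ)-w‖) * ∑' n,
          (((n+2:ℕ):ℝ) * ‖(((n+2:ℕ):ℂ) - w) / (1 - w)‖ * ‖a (n+2)‖) := tsum_mul_left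
      _ ≤ (‖z‖ * ‖(1:ℂ)-w‖) * 1 := by
        apply mul_le_mul_of_nonneg_left hle (by positivity)
  intro hzero
  rw [hzero, zero_sub, norm_neg, mul_one] at hnorm
  have hlt : ‖z‖ * ‖(1:ℂ)-w‖ < ‖(1:ℂ)-w‖ := mul_lt_of_lt_one_left h1wpos (mem_D.1 hz)
  linarith

lemma summable_sq (w₁ : ℂ) (hw : w₁ ≠ 1)
    (hS : Summable (fun n : ℕ => ((n+2:ℕ):ℝ) * ‖(((n+2:ℕ):ℂ) - w₁) / (1 - w₁)‖ * ‖a (n+2)‖)) :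
    Summable (fun k : ℕ => (k:ℝ) * (k:ℝ) * ‖a k‖) := by
  have h1wne : (1:ℂ) - w₁ ≠ 0 := sub_ne_zero.2 (Ne.symm hw)
  have h1wpos : 0 < ‖(1:ℂ) - w₁‖ := norm_pos_iff.2 h1wne
  rw [← summable_nat_add_iff 2]
  apply Summable.of_norm_bounded_eventually_nat
    (g := fun n => (2*‖(1:ℂ)-w₁‖) * (((n+2:ℕ):ℝ) * ‖(((n+2:ℕ):ℂ) - w₁) / (1 - w₁)‖ * ‖a (n+2)‖))
    (hS.mul_left _)
  rw [eventually_atTop]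
  refine ⟨⌈2*‖w₁‖⌉₊, fun n hn => ?_⟩
  have hw2 : 2*‖w₁‖ ≤ (n:ℝ) := Nat.ceil_le.1 hn
  rw [Real.norm_of_nonneg (by positivity)]
  have hX : ((n+2:ℕ):ℝ) - ‖w₁‖ ≤ ‖(((n+2:ℕ):ℂ)) - w₁‖ := by
    have h := norm_sub_norm_le (((n+2:ℕ):ℂ)) w₁
    rw [Complex.norm_natCast] at h
    linarith
  have hhalf : ((n+2:ℕ):ℝ)/2 ≤ ‖(((n+2:ℕ):ℂ)) - w₁‖ := by
    push_cast at hX ⊢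
    linarith
  have e2 : (2*‖(1:ℂ)-w₁‖) * (((n+2:ℕ):ℝ) * ‖(((n+2:ℕ):ℂ) - w₁) / (1 - w₁)‖ * ‖a (n+2)‖)
      = 2 * ((n+2:ℕ):ℝ) * ‖(((n+2:ℕ):ℂ)) - w₁‖ * ‖a (n+2)‖ := by
    rw [norm_div]
    rw [show (2*‖(1:ℂ)-w₁‖) * (((n+2:ℕ):ℝ) * (‖(((n+2:ℕ):ℂ) - w₁)‖ / ‖(1:ℂ) - w₁‖) * ‖a (n+2)‖)
      = 2 * ((n+2:ℕ):ℝ) * (‖(((n+2:ℕ):ℂ) - w₁)‖ / ‖(1:ℂ) - w₁‖ * ‖(1:ℂ) - w₁‖) * ‖a (n+2)‖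
      from by ring]
    rw [div_mul_cancel₀ _ (ne_of_gt h1wpos)]
  rw [e2]
  calc ((n+2:ℕ):ℝ) * ((n+2:ℕ):ℝ) * ‖a (n+2)‖
      = (2*((n+2:ℕ):ℝ)*‖a (n+2)‖) * (((n+2:ℕ):ℝ)/2) := by ring
    _ ≤ (2*((n+2:ℕ):ℝ)*‖a (n+2)‖) * ‖(((n+2:ℕ):ℂ)) - w₁‖ :=
      mul_le_mul_of_nonneg_left hhalf (by positivity)
    _ = 2 * ((n+2:ℕ):ℝ) * ‖(((n+2:ℕ):ℂ)) - w₁‖ * ‖a (n+2)‖ := by ring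

end Series

end Aux6


theorem stmt6 (ψ f : ℂ → ℂ) (a : ℕ → ℂ) (hψ : MaMinda ψ)
    (hψc : ContinuousOn ψ (Metric.closedBall 0 1))
    (hψi : Set.InjOn ψ (Metric.closedBall 0 1))
    (hf : IsClassA f) (ha0 : a 0 = 0) (ha1 : a 1 = 1)
    (hrep : ∀ z ∈ 𝔻, HasSum (fun k => a k * z ^ k) (f z))
    (hf' : ∀ z ∈ 𝔻, deriv f z ≠ 0)
    (hcoef : ∀ t ∈ Set.Ico (0:ℝ) (2*Real.pi),
      Summable (fun k : ℕ => ((k+2:ℕ):ℝ) *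
        ‖(((k+2 : ℕ) : ℂ) - ψ (Complex.exp (Complex.I*t))) /
          (1 - ψ (Complex.exp (Complex.I*t)))‖ * ‖a (k+2)‖) ∧
      ∑' k : ℕ, ((k+2:ℕ):ℝ) *
        ‖(((k+2 : ℕ) : ℂ) - ψ (Complex.exp (Complex.I*t))) /
          (1 - ψ (Complex.exp (Complex.I*t)))‖ * ‖a (k+2)‖ ≤ 1) :
    ConvexMM ψ f := by
  classical
  obtain ⟨hψd, hψinjD, hψre, hψ0, hψd0re, hψd0im, hψconj⟩ := hψ
  have hψd0 : deriv ψ 0 ≠ 0 := by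
    intro h; rw [h] at hψd0re; simp at hψd0re
  have hpi := Real.pi_pos
  have hexp_norm : ∀ t : ℝ, ‖Complex.exp (Complex.I * t)‖ = 1 := by
    intro t
    rw [Complex.norm_exp]
    simp
  have hne1 : ∀ u : ℂ, ‖u‖ = 1 → ψ u ≠ 1 := by
    intro u hu h
    have hucb : u ∈ Metric.closedBall (0:ℂ) 1 := by
      rw [Metric.mem_closedBall, dist_zero_right, hu]
    have h0cb : (0:ℂ) ∈ Metric.closedBall (0:ℂ) 1 := by simp
    have hu0 : u = 0 := hψi hucb h0cb (by rw [h, hψ0])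
    rw [hu0] at hu; simp at hu
  have h0mem : (0:ℝ) ∈ Set.Ico (0:ℝ) (2*Real.pi) := ⟨le_refl _, by linarith⟩
  obtain ⟨hS0, -⟩ := hcoef 0 h0mem
  have hw1ne : ψ (Complex.exp (Complex.I * ((0:ℝ):ℂ))) ≠ 1 := hne1 _ (hexp_norm 0)
  have hA : Summable (fun k : ℕ => (k:ℝ) * (k:ℝ) * ‖a k‖) :=
    Aux6.summable_sq _ hw1ne hS0
  have hu1 : Summable (fun k : ℕ => (k:ℝ) * ‖a k‖) := by
    apply Summable.of_nonneg_of_le (fun k => by positivity) _ hA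
    intro k
    rcases Nat.eq_zero_or_pos k with rfl | hk
    · simp
    · have h1 : (1:ℝ) ≤ (k:ℝ) := by exact_mod_cast hk
      calc (k:ℝ) * ‖a k‖ = 1 * ((k:ℝ) * ‖a k‖) := by ring
        _ ≤ (k:ℝ) * ((k:ℝ) * ‖a k‖) :=
          mul_le_mul_of_nonneg_right h1 (by positivity)
        _ = (k:ℝ) * (k:ℝ) * ‖a k‖ := by ring
  have hu2 : Summable (fun k : ℕ => (k:ℝ) * ((k-1:ℕ):ℝ) * ‖a k‖) := by
    apply Summable.of_nonneg_of_le (fun k => by positivity) _ hA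
    intro k
    have h1 : ((k-1:ℕ):ℝ) ≤ (k:ℝ) := by exact_mod_cast Nat.sub_le k 1
    gcongr
  have hD1 : ∀ z ∈ 𝔻, HasDerivAt f (∑' k : ℕ, a k * ((k:ℂ) * z ^ (k-1))) z :=
    fun z hz => Aux6.hasDerivAt_rep hu1 hrep hz
  have hPz : ∀ z ∈ 𝔻, deriv f z = ∑' k : ℕ, a k * ((k:ℂ) * z ^ (k-1)) :=
    fun z hz => (hD1 z hz).deriv
  have hD2 : ∀ z ∈ 𝔻, HasDerivAt (deriv f)
      (∑' k : ℕ, a k * ((k:ℂ) * (((k-1:ℕ):ℂ) * z ^ (k-1-1)))) z := by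
    intro z hz
    apply (Aux6.hasDerivAt_rep2 hu2 hz).congr_of_eventuallyEq
    filter_upwards [Aux6.hD_open.eventually_mem hz] with x hx
    exact hPz x hx
  have hQz : ∀ z ∈ 𝔻, deriv (deriv f) z
      = ∑' k : ℕ, a k * ((k:ℂ) * (((k-1:ℕ):ℂ) * z ^ (k-1-1))) :=
    fun z hz => (hD2 z hz).deriv
  have hPsum' : ∀ z ∈ 𝔻, HasSum (fun k : ℕ => a k * ((k:ℂ) * z ^ (k-1))) (deriv f z) := by
    intro z hz
    rw [hPz z hz]
    exact (Summable.of_norm_bounded hu1 (fun k => Aux6.bound1 k hz)).hasSum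
  have hQsum' : ∀ z ∈ 𝔻, HasSum (fun k : ℕ => a k * ((k:ℂ) * (((k-1:ℕ):ℂ) * z ^ (k-1-1))))
      (deriv (deriv f) z) := by
    intro z hz
    rw [hQz z hz]
    exact (Summable.of_norm_bounded hu2 (fun k => Aux6.bound2 k hz)).hasSum
  have hkey : ∀ z ∈ 𝔻, ∀ u : ℂ, ‖u‖ = 1 →
      1 + z * deriv (deriv f) z / deriv f z ≠ ψ u := by
    intro z hz u hu hcontra
    obtain ⟨t, ht, hexpu⟩ := Aux6.boundary_param hu
    obtain ⟨hSw, hlew⟩ := hcoef t ht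
    rw [hexpu] at hSw hlew
    have hwne1 : ψ u ≠ 1 := hne1 u hu
    have hkn := Aux6.key_ne hz hwne1 ha0 ha1 (hPsum' z hz) (hQsum' z hz) hSw hlew
    apply hkn
    have hfz := hf' z hz
    field_simp at hcontra
    linear_combination hcontra
  have hVopen : IsOpen (ψ '' 𝔻) := Aux6.V_open hψd hψi
  have hfa : AnalyticOnNhd ℂ f 𝔻 := hf.1.analyticOnNhd Aux6.hD_open
  have hgdiff : DifferentiableOn ℂ (fun z => 1 + z * deriv (deriv f) z / deriv f z) 𝔻 := by
    apply DifferentiableOn.add (differentiableOn_const 1)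
    exact (differentiableOn_id.mul hfa.deriv.deriv.differentiableOn).div
      hfa.deriv.differentiableOn hf'
  have hfront : frontier (ψ '' 𝔻) ⊆ ψ '' Metric.sphere 0 1 := by
    have hcV : closure (ψ '' 𝔻) ⊆ ψ '' Metric.closedBall 0 1 :=
      closure_minimal (Set.image_mono (f := ψ) Aux6.D_subset)
        ((isCompact_closedBall (0:ℂ) 1).image_of_continuousOn hψc).isClosed
    intro x hx
    rw [hVopen.frontier_eq] at hx
    obtain ⟨hxc, hxV⟩ := hx
    obtain ⟨u, hu, rfl⟩ := hcV hxc
    refine ⟨u, ?_, rfl⟩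
    rw [mem_sphere_zero_iff_norm]
    have hle : ‖u‖ ≤ 1 := by rwa [Metric.mem_closedBall, dist_zero_right] at hu
    rcases hle.lt_or_eq with h | h
    · exact absurd ⟨u, Aux6.mem_D.2 h, rfl⟩ hxV
    · exact h
  have hgV : ∀ z ∈ 𝔻, (1 + z * deriv (deriv f) z / deriv f z) ∈ ψ '' 𝔻 := by
    have hsub : (fun z => 1 + z * deriv (deriv f) z / deriv f z) '' 𝔻 ⊆ ψ '' 𝔻 := by
      apply IsPreconnected.subset_left_of_subset_union hVopen
        isClosed_closure.isOpen_compl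
        (disjoint_compl_right.mono_left subset_closure)
      · rintro x ⟨zz, hzz, rfl⟩
        by_cases hx : (1 + zz * deriv (deriv f) zz / deriv f zz) ∈ closure (ψ '' 𝔻)
        · left
          by_contra hxV
          have hfr : (1 + zz * deriv (deriv f) zz / deriv f zz) ∈ frontier (ψ '' 𝔻) := by
            rw [hVopen.frontier_eq]; exact ⟨hx, hxV⟩
          obtain ⟨u, hu, hequ⟩ := hfront hfr
          exact hkey zz hzz u (mem_sphere_zero_iff_norm.1 hu) hequ.symm
        · right; exact hx
      · refine ⟨1, ⟨0, Aux6.zero_mem_D, by simp⟩, ⟨0, Aux6.zero_mem_D, hψ0⟩⟩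
      · exact Aux6.hD_conn.image _ hgdiff.continuousOn
    intro z hz
    exact hsub ⟨z, hz, rfl⟩
  refine ⟨hf, hf', ?_⟩
  refine ⟨fun z => Function.invFunOn ψ 𝔻 (1 + z * deriv (deriv f) z / deriv f z),
    ?_, ?_, ?_, ?_⟩
  · intro z hz
    have hχ := Aux6.chi_diffAt hψd hψc hψi hψd0 (hgV z hz)
    have hgz : DifferentiableAt ℂ (fun z => 1 + z * deriv (deriv f) z / deriv f z) z :=
      (hgdiff z hz).differentiableAt (Aux6.hD_open.mem_nhds hz)
    exact (hχ.comp z hgz).differentiableWithinAt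
  · have hg0 : 1 + (0:ℂ) * deriv (deriv f) 0 / deriv f 0 = 1 := by simp
    show Function.invFunOn ψ 𝔻 (1 + (0:ℂ) * deriv (deriv f) 0 / deriv f 0) = 0
    rw [hg0, ← hψ0, Aux6.chi_psi hψi Aux6.zero_mem_D]
  · intro z hz
    exact (Aux6.chi_mem (hgV z hz)).1
  · intro z hz
    exact ((Aux6.chi_mem (hgV z hz)).2).symm
end
end

section
/- Let F(z) = z(1+z)/(1−z)³ on 𝔻. For every z ∈ 𝔻 with |z| = r (0 < r < 1), Re(zF'(z)/F(z)) ≥ (1 − 4r + r²)/(1 − r²). -/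
open Complex Metric Set

noncomputable section

theorem stmt9 :
    ∀ z : ℂ, z ≠ 0 → ‖z‖ < 1 →
      (1 - 4*‖z‖ + ‖z‖^2) / (1 - ‖z‖^2) ≤
        (z * deriv (fun w => w * (1 + w) / (1 - w)^3) z /
          (z * (1 + z) / (1 - z)^3)).re := by
  intro z hz0 hz1
  have h1z : (1:ℂ) - z ≠ 0 := by
    intro h
    have : z = 1 := by linear_combination -h
    rw [this] at hz1; simp at hz1
  have h2z : (1:ℂ) + z ≠ 0 := by
    intro h
    have : z = -1 := by linear_combination h
    rw [this] at hz1; simp at hz1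
  set r := ‖z‖ with hr
  have hrpos : 0 < r := norm_pos_iff.mpr hz0
  -- derivative
  have hder : deriv (fun w : ℂ => w * (1 + w) / (1 - w)^3) z = (1 + 4*z + z^2)/(1-z)^4 := by
    have hnum : HasDerivAt (fun w : ℂ => w * (1 + w)) (1 + 2*z) z := by
      have := (hasDerivAt_id z).fun_mul ((hasDerivAt_const z (1:ℂ)).fun_add (hasDerivAt_id z))
      refine this.congr_deriv ?_
      simp; ring
    have h0 : HasDerivAt (fun w : ℂ => 1 - w) (-1) z := by
      simpa using (hasDerivAt_const z (1:ℂ)).fun_sub (hasDerivAt_id z)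
    have hden : HasDerivAt (fun w : ℂ => (1 - w)^3) (((3:ℕ):ℂ) * (1 - z)^2 * (-1)) z := by
      simpa using h0.fun_pow 3
    have hden3 : ((1:ℂ) - z)^3 ≠ 0 := pow_ne_zero _ h1z
    have hd := (hnum.fun_div hden hden3).deriv
    rw [hd]
    field_simp
    ring
  rw [hder]
  have key : z * ((1 + 4*z + z^2)/(1-z)^4) / (z * (1+z) / (1-z)^3)
      = (1 + 4*z + z^2) / ((1-z)*(1+z)) := by
    field_simp
  rw [key]
  set x := z.re with hx
  set y := z.im with hy
  have hxy : x^2 + y^2 = r^2 := by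
    rw [hr, Complex.sq_norm, normSq_apply]; ring
  have hxabs : |x| ≤ r := by rw [hr]; exact Complex.abs_re_le_norm z
  have hxl : -r ≤ x := (abs_le.mp hxabs).1
  have hxu : x ≤ r := (abs_le.mp hxabs).2
  set a : ℂ := 1 + 4*z + z^2 with ha
  set b : ℂ := (1-z)*(1+z) with hb
  have ha_re : a.re = 1 + 4*x + (x^2 - y^2) := by
    simp [ha, pow_two, Complex.add_re, Complex.mul_re, Complex.mul_im]
    try ring
  have ha_im : a.im = 4*y + 2*x*y := by
    simp [ha, pow_two, Complex.add_im, Complex.mul_re, Complex.mul_im]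
    try ring
  have hb_re : b.re = 1 - x^2 + y^2 := by
    simp [hb, Complex.mul_re, Complex.sub_re, Complex.sub_im]
    ring
  have hb_im : b.im = -2*x*y := by
    simp [hb, Complex.mul_im, Complex.sub_re, Complex.sub_im]
    ring
  have hr2 : (0:ℝ) < 1 - r^2 := by nlinarith
  have hns : Complex.normSq b = 1 + 2*r^2 + r^4 - 4*x^2 := by
    rw [normSq_apply, hb_re, hb_im]
    linear_combination (2 + x^2 + y^2 + r^2) * hxy
  have hnspos : 0 < Complex.normSq b := by
    rw [hns]; nlinarith [hxy, sq_nonneg y, mul_pos hr2 hr2]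
  have hre : a.re * b.re + a.im * b.im = (1 - r^2) * (1 + r^2 + 4*x) := by
    rw [ha_re, ha_im, hb_re, hb_im]
    linear_combination (-(4*x) - (x^2 + y^2 + r^2)) * hxy
  rw [Complex.div_re, ← add_div, div_le_div_iff₀ hr2 hnspos, hre, hns]
  -- now pure inequality in x, r
  have hLm : (0:ℝ) ≤ 1 - 2*r + 6*r^2 - 2*r^3 + r^4 := by
    nlinarith [sq_nonneg (1-r), sq_nonneg (r*(1-r)), sq_nonneg r]
  have hLp : (0:ℝ) ≤ (1 - r^2)^2 := sq_nonneg _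
  have hlin : 0 ≤ (1 - 4*r + r^2)*x + (1 + r^2)*(1 - r + r^2) := by
    nlinarith [mul_nonneg (by linarith : (0:ℝ) ≤ r - x) hLm,
      mul_nonneg (by linarith : (0:ℝ) ≤ x + r) hLp, hrpos]
  nlinarith [mul_nonneg (by linarith : (0:ℝ) ≤ x + r) hlin]
end
end

section
/- Let 0 < q < 1 and H(z) = z/((1 − qz)(1 − z)) on 𝔻. For every z ∈ 𝔻 with |z| = r (0 < r < 1), Re(zH'(z)/H(z)) ≥ (1 − qr²)/((1 + r)(1 + qr)). -/
open Complex Metric Set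

noncomputable section

lemma lem_re (w : ℂ) (hw : ‖w‖ < 1) : -‖w‖/(1+‖w‖) ≤ (w/(1-w)).re := by
  have hne : (1 : ℂ) - w ≠ 0 := by
    intro h
    have : w = 1 := by linear_combination -h
    simp [this] at hw
  have habs : ‖w‖ = ‖w‖ := rfl
  set x := w.re
  set y := w.im
  have hr2 : x^2 + y^2 = ‖w‖^2 := by
    rw [← habs, Complex.sq_norm]; simp [Complex.normSq_apply, x, y]; ring
  have hx : -‖w‖ ≤ x := by
    have := Complex.abs_re_le_norm w
    rw [habs] at this
    exact (abs_le.mp this).1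
  have hden : 0 < Complex.normSq (1 - w) := Complex.normSq_pos.mpr hne
  have hre : (w/(1-w)).re = (x - ‖w‖^2) / Complex.normSq (1 - w) := by
    rw [Complex.div_re]
    have h1 : (1 - w).re = 1 - x := by simp [x]
    have h2 : (1 - w).im = -y := by simp [y]
    rw [h1, h2]
    rw [← add_div]
    congr 1
    nlinarith [hr2]
  rw [hre]
  have hns : Complex.normSq (1 - w) = 1 - 2*x + ‖w‖^2 := by
    have h1 : (1 - w).re = 1 - x := by simp [x]
    have h2 : (1 - w).im = -y := by simp [y]
    rw [Complex.normSq_apply, h1, h2]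
    nlinarith [hr2]
  rw [hns]
  rw [div_le_div_iff₀ (by positivity) (by rw [← hns]; exact hden)]
  nlinarith [norm_nonneg w, hw]

theorem stmt15 (q : ℝ) (hq0 : 0 < q) (hq1 : q < 1) :
    ∀ z : ℂ, z ≠ 0 → ‖z‖ < 1 →
      (1 - q*‖z‖^2) / ((1 + ‖z‖) * (1 + q*‖z‖)) ≤
        (z * deriv (fun w => w / ((1 - (q:ℂ)*w) * (1 - w))) z /
          (z / ((1 - (q:ℂ)*z) * (1 - z)))).re := by
  intro z hz0 hz1
  have hqz : ‖(q:ℂ)*z‖ < 1 := by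
    rw [norm_mul, Complex.norm_real]
    rw [Real.norm_eq_abs, abs_of_pos hq0]
    nlinarith [norm_nonneg z]
  have h1 : (1 : ℂ) - (q:ℂ)*z ≠ 0 := by
    intro h
    have : (q:ℂ)*z = 1 := by linear_combination -h
    rw [this] at hqz; simp at hqz
  have h2 : (1 : ℂ) - z ≠ 0 := by
    intro h
    have : z = 1 := by linear_combination -h
    rw [this] at hz1; simp at hz1
  have hD : ((1 : ℂ) - (q:ℂ)*z) * (1 - z) ≠ 0 := mul_ne_zero h1 h2
  have hg : HasDerivAt (fun w : ℂ => (1 - (q:ℂ)*w) * (1 - w))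
      ((-(q:ℂ))*(1-z) + (1-(q:ℂ)*z)*(-1)) z := by
    have hA : HasDerivAt (fun w : ℂ => 1 - (q:ℂ)*w) (-(q:ℂ)) z := by
      simpa using ((hasDerivAt_id z).const_mul (q:ℂ)).const_sub 1
    have hB : HasDerivAt (fun w : ℂ => 1 - w) (-1 : ℂ) z := by
      simpa using (hasDerivAt_id z).const_sub 1
    exact hA.mul hB
  have hf : HasDerivAt (fun w : ℂ => w / ((1 - (q:ℂ)*w) * (1 - w)))
      ((1 * ((1 - (q:ℂ)*z) * (1 - z)) - z * ((-(q:ℂ))*(1-z) + (1-(q:ℂ)*z)*(-1))) /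
        ((1 - (q:ℂ)*z) * (1 - z))^2) z := (hasDerivAt_id z).div hg hD
  have key : z * deriv (fun w : ℂ => w / ((1 - (q:ℂ)*w) * (1 - w))) z /
      (z / ((1 - (q:ℂ)*z) * (1 - z))) = 1 + z/(1-z) + (q:ℂ)*z/(1-(q:ℂ)*z) := by
    rw [hf.deriv]
    have h1' : (1:ℂ) - z*(q:ℂ) ≠ 0 := by rwa [mul_comm]
    field_simp
    ring
  rw [key]
  have hA := lem_re z hz1
  have hB := lem_re ((q:ℂ)*z) hqz
  have hnq : ‖(q:ℂ)*z‖ = q*‖z‖ := by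
    rw [norm_mul, Complex.norm_real, Real.norm_eq_abs, abs_of_pos hq0]
  rw [hnq] at hB
  simp only [Complex.add_re, Complex.one_re]
  have heq : (1 - q*‖z‖^2) / ((1 + ‖z‖) * (1 + q*‖z‖))
      = 1 + (-‖z‖/(1+‖z‖)) + (-(q*‖z‖)/(1+q*‖z‖)) := by
    have d1 : (0:ℝ) < 1 + ‖z‖ := by positivity
    have d2 : (0:ℝ) < 1 + q*‖z‖ := by positivity
    field_simp
    ring
  rw [heq]
  linarith [hA, hB]
end
end
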